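/- arXiv:1801.00107 — 3 statements merged into one kernel-verified Lean document; each statement's English description precedes it below -/
import Mathlib

section
/- Let A and B be positive bounded operators on a complex Hilbert space H, and let S be a positive operator such that S[x] = sup_{n∈ℕ} inf_{y∈H} (B[x−y] + n·A[y]) for all x ∈ H (i.e. S = [A]B). Then S ≤ B, S is A-absolutely continuous, the operators B − S and A are singular, and S is the greatest element of the set of positive operators C with C ≤ B and C A-absolutely continuous. -/
open scoped ComplexOrder

/-- `A` is a positive operator: `⟪A x, x⟫ ≥ 0` for all `x`. -/
def IsPosOp {H : Type*} [NormedAddCommGroup H] [InnerProductSpace ℂ H]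
    (A : H →L[ℂ] H) : Prop :=
  ∀ x : H, 0 ≤ (inner ℂ (A x) x : ℂ)

/-- The Loewner order: `A ≤ B` iff `B - A` is positive. -/
def OpLe {H : Type*} [NormedAddCommGroup H] [InnerProductSpace ℂ H]
    (A B : H →L[ℂ] H) : Prop :=
  IsPosOp (B - A)

/-- The quadratic form of an operator: `A[x] = re ⟪A x, x⟫`. -/
noncomputable def QF {H : Type*} [NormedAddCommGroup H] [InnerProductSpace ℂ H]
    (A : H →L[ℂ] H) (x : H) : ℝ :=
  (inner ℂ (A x) x : ℂ).re

/-- `A` and `B` are singular: the only positive operator below both is `0`. -/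
def SingOp {H : Type*} [NormedAddCommGroup H] [InnerProductSpace ℂ H]
    (A B : H →L[ℂ] H) : Prop :=
  ∀ C : H →L[ℂ] H, IsPosOp C → OpLe C A → OpLe C B → C = 0

/-- `B` is `A`-absolutely continuous: `B` is the strong limit of a monotone increasing
sequence of positive operators, each dominated by a nonnegative multiple of `A`. -/
def AbsCont {H : Type*} [NormedAddCommGroup H] [InnerProductSpace ℂ H]
    (B A : H →L[ℂ] H) : Prop :=
  ∃ Bn : ℕ → H →L[ℂ] H,
    (∀ n, IsPosOp (Bn n)) ∧
    (∀ m n, m ≤ n → OpLe (Bn m) (Bn n)) ∧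
    (∀ n, ∃ c : ℝ, 0 ≤ c ∧ OpLe (Bn n) (c • A)) ∧
    (∀ x : H, Filter.Tendsto (fun n => Bn n x) Filter.atTop (nhds (B x)))

/-- `S = [A]B`: the quadratic form of `S` is `sup_n inf_y (B[x-y] + n·A[y])`. -/
def IsShort {H : Type*} [NormedAddCommGroup H] [InnerProductSpace ℂ H]
    (A B S : H →L[ℂ] H) : Prop :=
  ∀ x : H, QF S x = ⨆ n : ℕ, ⨅ y : H, (QF B (x - y) + (n : ℝ) * QF A y)

section Basic
variable {H : Type*} [NormedAddCommGroup H] [InnerProductSpace ℂ H]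

lemma IsPosOp.inner_eq {T : H →L[ℂ] H} (hT : IsPosOp T) (x : H) :
    (inner ℂ (T x) x : ℂ) = (QF T x : ℂ) := by
  have h := hT x
  rw [Complex.nonneg_iff] at h
  apply Complex.ext <;> simp [QF, h.2.symm]

lemma IsPosOp.qf_nonneg {T : H →L[ℂ] H} (hT : IsPosOp T) (x : H) : 0 ≤ QF T x := by
  have h := hT x
  rw [Complex.nonneg_iff] at h
  exact h.1

lemma qf_sub (C D : H →L[ℂ] H) (x : H) : QF (C - D) x = QF C x - QF D x := by
  simp [QF, inner_sub_left]

lemma qf_add (C D : H →L[ℂ] H) (x : H) : QF (C + D) x = QF C x + QF D x := by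
  simp [QF, inner_add_left]

lemma inner_real_smul_left (c : ℝ) (v w : H) :
    (inner ℂ (c • v) w : ℂ) = (c : ℂ) * inner ℂ v w := by
  rw [RCLike.real_smul_eq_coe_smul (K := ℂ), inner_smul_left, RCLike.conj_ofReal]
  norm_cast

lemma qf_smul_real (c : ℝ) (C : H →L[ℂ] H) (x : H) : QF (c • C) x = c * QF C x := by
  simp [QF, inner_real_smul_left, Complex.re_ofReal_mul]

lemma isPosOp_smul {c : ℝ} (hc : 0 ≤ c) {C : H →L[ℂ] H} (hC : IsPosOp C) :
    IsPosOp (c • C) := by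
  intro x
  have := hC x
  rw [Complex.nonneg_iff] at this ⊢
  constructor
  · simpa [inner_real_smul_left, Complex.re_ofReal_mul] using mul_nonneg hc this.1
  · simp [inner_real_smul_left, Complex.im_ofReal_mul, ← this.2]

lemma isPosOp_add {C D : H →L[ℂ] H} (hC : IsPosOp C) (hD : IsPosOp D) :
    IsPosOp (C + D) := by
  intro x
  simpa [inner_add_left] using add_nonneg (hC x) (hD x)

lemma opLe_of_qf_le {C D : H →L[ℂ] H} (hC : IsPosOp C) (hD : IsPosOp D)
    (h : ∀ x, QF C x ≤ QF D x) : OpLe C D := by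
  intro x
  have : (inner ℂ ((D - C) x) x : ℂ) = ((QF D x - QF C x : ℝ) : ℂ) := by
    simp [ContinuousLinearMap.sub_apply, inner_sub_left, hC.inner_eq x, hD.inner_eq x]
  rw [this, Complex.zero_le_real]
  linarith [h x]

lemma OpLe.qf_le {C D : H →L[ℂ] H} (h : OpLe C D) (x : H) : QF C x ≤ QF D x := by
  have h2 := h x
  rw [Complex.nonneg_iff] at h2
  have : QF (D - C) x = QF D x - QF C x := qf_sub D C x
  have h3 : 0 ≤ QF (D - C) x := h2.1
  linarith [this ▸ h3]

end Basic

section Hilbert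
variable {H : Type*} [NormedAddCommGroup H] [InnerProductSpace ℂ H] [CompleteSpace H]

lemma isPosOp_iff_nonneg (T : H →L[ℂ] H) : IsPosOp T ↔ 0 ≤ T := by
  rw [ContinuousLinearMap.nonneg_iff_isPositive, ContinuousLinearMap.isPositive_iff_complex]
  constructor
  · intro h x
    have h1 := h x
    rw [Complex.nonneg_iff] at h1
    constructor
    · apply Complex.ext <;> simp [← h1.2]
    · simpa using h1.1
  · intro h x
    obtain ⟨h1, h2⟩ := h x
    rw [Complex.nonneg_iff, ← h1]
    simpa using h2

lemma opLe_iff_le {C D : H →L[ℂ] H} : OpLe C D ↔ C ≤ D := by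
  rw [OpLe, isPosOp_iff_nonneg, ContinuousLinearMap.nonneg_iff_isPositive]
  exact (ContinuousLinearMap.le_def C D).symm

/-- A positive operator has a self-adjoint square root; key facts packaged. -/
lemma IsPosOp.exists_sqrt {T : H →L[ℂ] H} (hT : IsPosOp T) :
    ∃ R : H →L[ℂ] H, (∀ z, QF T z = ‖R z‖ ^ 2) ∧ (∀ x, ‖T x‖ ^ 2 ≤ ‖T‖ * QF T x) := by
  have hT' : 0 ≤ T := (isPosOp_iff_nonneg T).mp hT
  refine ⟨CFC.sqrt T, ?_, ?_⟩ <;>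
  · set R := CFC.sqrt T with hRdef
    have hRR : R * R = T := CFC.sqrt_mul_sqrt_self T hT'
    have hRsa : IsSelfAdjoint R := IsSelfAdjoint.of_nonneg (CFC.sqrt_nonneg T)
    have hadj : ContinuousLinearMap.adjoint R = R := by
      rwa [← ContinuousLinearMap.star_eq_adjoint]
    have hqf : ∀ z, QF T z = ‖R z‖ ^ 2 := by
      intro z
      have h0 : (inner ℂ (T z) z : ℂ) = inner ℂ (ContinuousLinearMap.adjoint R (R z)) z := by
        rw [hadj, ← hRR, ContinuousLinearMap.mul_apply]
      rw [QF, h0, ContinuousLinearMap.adjoint_inner_left, inner_self_eq_norm_sq_to_K]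
      norm_cast
    first
    | exact hqf
    | -- norm bound
      intro x
      have h1 : ‖T x‖ ≤ ‖R‖ * ‖R x‖ := by
        rw [← hRR, ContinuousLinearMap.mul_apply]
        exact R.le_opNorm (R x)
      have h2 : ‖R‖ * ‖R‖ = ‖T‖ := by
        rw [← hRR, ← CStarRing.norm_star_mul_self (x := R), hRsa.star_eq]
      calc ‖T x‖ ^ 2 ≤ (‖R‖ * ‖R x‖) ^ 2 := by
            apply sq_le_sq' _ h1; linarith [norm_nonneg (T x), mul_nonneg (norm_nonneg R) (norm_nonneg (R x))]
        _ = ‖T‖ * QF T x := by rw [hqf x]; ring_nf; rw [← h2]; ring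

lemma IsPosOp.norm_apply_sq_le {T : H →L[ℂ] H} (hT : IsPosOp T) (x : H) :
    ‖T x‖ ^ 2 ≤ ‖T‖ * QF T x :=
  hT.exists_sqrt.choose_spec.2 x

lemma IsPosOp.sqrt_qf_triangle {T : H →L[ℂ] H} (hT : IsPosOp T) (x y : H) :
    Real.sqrt (QF T x) ≤ Real.sqrt (QF T (x - y)) + Real.sqrt (QF T y) := by
  obtain ⟨R, hR, -⟩ := hT.exists_sqrt
  have hs : ∀ z, Real.sqrt (QF T z) = ‖R z‖ := by
    intro z; rw [hR z, Real.sqrt_sq (norm_nonneg _)]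
  rw [hs, hs, hs]
  calc ‖R x‖ = ‖R (x - y) + R y‖ := by rw [← map_add, sub_add_cancel]
    _ ≤ ‖R (x - y)‖ + ‖R y‖ := norm_add_le _ _

lemma norm_le_of_opLe {C D : H →L[ℂ] H} (hC : IsPosOp C) (h : OpLe C D) : ‖C‖ ≤ ‖D‖ :=
  CStarAlgebra.norm_le_norm_of_nonneg_of_le ((isPosOp_iff_nonneg C).mp hC) (opLe_iff_le.mp h)

end Hilbert

section Parallel
variable {H : Type*} [NormedAddCommGroup H] [InnerProductSpace ℂ H] [CompleteSpace H]

lemma qf_one (x : H) : QF (1 : H →L[ℂ] H) x = ‖x‖ ^ 2 := by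
  have : (inner ℂ x x : ℂ) = ((‖x‖ ^ 2 : ℝ) : ℂ) := by
    exact_mod_cast inner_self_eq_norm_sq_to_K (𝕜 := ℂ) x
  have h2 : QF (1 : H →L[ℂ] H) x = (inner ℂ x x : ℂ).re := rfl
  rw [h2, this, Complex.ofReal_re]

lemma isPosOp_one : IsPosOp (1 : H →L[ℂ] H) := by
  intro x
  have : (inner ℂ x x : ℂ) = ((‖x‖ ^ 2 : ℝ) : ℂ) := by
    exact_mod_cast inner_self_eq_norm_sq_to_K (𝕜 := ℂ) x
  simp only [ContinuousLinearMap.one_apply, this]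
  rw [Complex.zero_le_real]
  positivity

lemma IsPosOp.symm_re {C : H →L[ℂ] H} (hC : IsPosOp C) (v w : H) :
    (inner ℂ (C v) w : ℂ).re = (inner ℂ (C w) v : ℂ).re := by
  have hsym : (inner ℂ (C v) w : ℂ) = inner ℂ v (C w) :=
    (ContinuousLinearMap.isSelfAdjoint_iff_isSymmetric.mp
      ((ContinuousLinearMap.nonneg_iff_isPositive C).mp
        ((isPosOp_iff_nonneg C).mp hC)).isSelfAdjoint) v w
  rw [hsym, ← inner_conj_symm]
  exact Complex.conj_re _

lemma IsPosOp.qf_sub_expand {C : H →L[ℂ] H} (hC : IsPosOp C) (v w : H) :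
    QF C (v - w) = QF C v - 2 * (inner ℂ (C v) w : ℂ).re + QF C w := by
  have h := hC.symm_re w v
  simp only [QF, map_sub, inner_sub_left, inner_sub_right, Complex.sub_re, Complex.add_re]
  linarith

lemma exists_parallel_eps {A B : H →L[ℂ] H} (hA : IsPosOp A) (hB : IsPosOp B) (n : ℕ)
    {ε : ℝ} (hε : 0 < ε) :
    ∃ T : H →L[ℂ] H, IsPosOp T ∧
      ∀ x, QF T x = ⨅ y : H, (QF B (x - y) + (n : ℝ) * QF A y + ε * ‖y‖ ^ 2) := by
  set D : H →L[ℂ] H := (n : ℝ) • A + B + ε • 1 with hD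
  have hApos : IsPosOp ((n : ℝ) • A) := isPosOp_smul (Nat.cast_nonneg n) hA
  have hone : IsPosOp (ε • (1 : H →L[ℂ] H)) := isPosOp_smul hε.le isPosOp_one
  have hDpos : IsPosOp D := isPosOp_add (isPosOp_add hApos hB) hone
  have hDqf : ∀ y, QF D y = (n : ℝ) * QF A y + QF B y + ε * ‖y‖ ^ 2 := by
    intro y
    rw [hD, qf_add, qf_add, qf_smul_real, qf_smul_real, qf_one]
  have hlow : ∀ x, ε * ‖x‖ ^ 2 ≤ QF D x := by
    intro x
    rw [hDqf x]
    have h1 : 0 ≤ (n : ℝ) * QF A x := mul_nonneg (Nat.cast_nonneg n) (hA.qf_nonneg x)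
    linarith [hB.qf_nonneg x]
  -- D is invertible
  have hunit : IsUnit D := by
    apply ContinuousLinearMap.isUnit_of_forall_le_norm_inner_map D (c := ⟨ε, hε.le⟩)
      (by exact_mod_cast hε)
    intro x
    rw [hDpos.inner_eq x, Complex.norm_real]
    calc ‖x‖ ^ 2 * ε = ε * ‖x‖ ^ 2 := by ring
      _ ≤ QF D x := hlow x
      _ ≤ |QF D x| := le_abs_self _
      _ = ‖QF D x‖ := rfl
  set E : H →L[ℂ] H := (↑hunit.unit⁻¹ : H →L[ℂ] H) with hE
  have hDE : ∀ z, D (E z) = z := by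
    intro z
    have h2 : D * E = 1 := by
      have := hunit.unit.mul_inv
      rw [← hunit.unit_spec] at *
      exact this
    calc D (E z) = (D * E) z := rfl
      _ = z := by rw [h2]; rfl
  set T : H →L[ℂ] H := B - B * E * B with hT
  refine ⟨T, ?_⟩
  -- quadratic form identities
  have hBsym := hB.symm_re
  have hDsym := hDpos.symm_re
  have key : ∀ x, (∀ y, QF B (x - y) + (n : ℝ) * QF A y + ε * ‖y‖ ^ 2
      = QF T x + QF D (y - E (B x))) ∧ (inner ℂ (T x) x : ℂ) = ((QF T x : ℝ) : ℂ) := by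
    intro x
    set w := E (B x) with hw
    have hDw : D w = B x := hDE (B x)
    -- (***) QF T x = QF B x - QF D w
    have hBwx : (inner ℂ (B w) x : ℂ).re = QF D w := by
      have h1 : (inner ℂ (B x) w : ℂ).re = (inner ℂ (D w) w : ℂ).re := by rw [hDw]
      calc (inner ℂ (B w) x : ℂ).re = (inner ℂ (B x) w : ℂ).re := hBsym w x
        _ = (inner ℂ (D w) w : ℂ).re := h1
        _ = QF D w := rfl
    have hTx : QF T x = QF B x - QF D w := by
      rw [hT, qf_sub]
      have hq : QF (B * E * B) x = QF D w := hBwx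
      linarith
    constructor
    · intro y
      have e1 : QF B (x - y) = QF B x - 2 * (inner ℂ (B x) y : ℂ).re + QF B y :=
        hB.qf_sub_expand x y
      have e2 : QF D (y - w) = QF D y - 2 * (inner ℂ (D y) w : ℂ).re + QF D w :=
        hDpos.qf_sub_expand y w
      have e3 : (inner ℂ (D y) w : ℂ).re = (inner ℂ (B x) y : ℂ).re := by
        calc (inner ℂ (D y) w : ℂ).re = (inner ℂ (D w) y : ℂ).re := hDsym y w
          _ = (inner ℂ (B x) y : ℂ).re := by rw [hDw]
      rw [hDqf y] at *
      rw [hTx]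
      linarith [e1, e2, e3]
    · -- realness of ⟪T x, x⟫
      have h1 : (inner ℂ ((B * E * B) x) x : ℂ) = inner ℂ (B w) x := rfl
      have h2 : (inner ℂ (B w) x : ℂ) = ((QF D w : ℝ) : ℂ) := by
        have hsymB : (inner ℂ (B w) x : ℂ) = inner ℂ w (B x) :=
          (ContinuousLinearMap.isSelfAdjoint_iff_isSymmetric.mp
            ((ContinuousLinearMap.nonneg_iff_isPositive B).mp
              ((isPosOp_iff_nonneg B).mp hB)).isSelfAdjoint) w x
        calc (inner ℂ (B w) x : ℂ) = inner ℂ w (B x) := hsymB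
          _ = inner ℂ w (D w) := by rw [hDw]
          _ = (starRingEnd ℂ) (inner ℂ (D w) w) := (inner_conj_symm w (D w)).symm
          _ = (starRingEnd ℂ) ((QF D w : ℝ) : ℂ) := by rw [hDpos.inner_eq w]
          _ = ((QF D w : ℝ) : ℂ) := Complex.conj_ofReal _
      have h3 : (inner ℂ (T x) x : ℂ) = inner ℂ (B x) x - inner ℂ ((B * E * B) x) x := by
        rw [hT]; simp [ContinuousLinearMap.sub_apply, inner_sub_left]
      rw [h3, h1, h2, hB.inner_eq x, hTx]
      push_cast
      ring
  -- positivity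
  have hqf_eq : ∀ x, QF T x = ⨅ y : H, (QF B (x - y) + (n : ℝ) * QF A y + ε * ‖y‖ ^ 2) := by
    intro x
    obtain ⟨hFy, -⟩ := key x
    have hge : ∀ y, QF T x ≤ QF B (x - y) + (n : ℝ) * QF A y + ε * ‖y‖ ^ 2 := by
      intro y
      rw [hFy y]
      linarith [hDpos.qf_nonneg (y - E (B x))]
    have hw : QF B (x - E (B x)) + (n : ℝ) * QF A (E (B x)) + ε * ‖E (B x)‖ ^ 2 = QF T x := by
      rw [hFy (E (B x))]
      simp [hDpos.inner_eq, QF]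
    refine le_antisymm (le_ciInf hge) ?_
    calc (⨅ y : H, (QF B (x - y) + (n : ℝ) * QF A y + ε * ‖y‖ ^ 2))
        ≤ QF B (x - E (B x)) + (n : ℝ) * QF A (E (B x)) + ε * ‖E (B x)‖ ^ 2 :=
          ciInf_le ⟨QF T x, by rintro r ⟨y, rfl⟩; exact hge y⟩ _
      _ = QF T x := hw
  have hTpos : IsPosOp T := by
    intro x
    rw [(key x).2, Complex.zero_le_real]
    have h0 : QF T x = _ := hqf_eq x
    rw [h0]
    apply le_ciInf
    intro y
    have h1 : 0 ≤ (n : ℝ) * QF A y := mul_nonneg (Nat.cast_nonneg n) (hA.qf_nonneg y)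
    have h2 : 0 ≤ ε * ‖y‖ ^ 2 := by positivity
    linarith [hB.qf_nonneg (x - y)]
  exact ⟨hTpos, hqf_eq⟩

lemma exists_parallel {A B : H →L[ℂ] H} (hA : IsPosOp A) (hB : IsPosOp B) (n : ℕ) :
    ∃ T : H →L[ℂ] H, IsPosOp T ∧
      ∀ x, QF T x = ⨅ y : H, (QF B (x - y) + (n : ℝ) * QF A y) := by
  -- the ε-regularized operators
  have hex : ∀ k : ℕ, ∃ T : H →L[ℂ] H, IsPosOp T ∧
      ∀ x, QF T x = ⨅ y : H, (QF B (x - y) + (n : ℝ) * QF A y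
        + (1 / ((k : ℝ) + 1)) * ‖y‖ ^ 2) :=
    fun k => exists_parallel_eps hA hB n (by positivity)
  choose Tk hTkpos hTkqf using hex
  set base : H → H → ℝ := fun x y => QF B (x - y) + (n : ℝ) * QF A y with hbase
  have hbase_nonneg : ∀ x y, 0 ≤ base x y := fun x y =>
    add_nonneg (hB.qf_nonneg _) (mul_nonneg (Nat.cast_nonneg n) (hA.qf_nonneg _))
  have hFk_nonneg : ∀ (k : ℕ) (x y : H), 0 ≤ base x y + (1 / ((k : ℝ) + 1)) * ‖y‖ ^ 2 := by
    intro k x y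
    have h0 : (0:ℝ) ≤ (1 / ((k : ℝ) + 1)) * ‖y‖ ^ 2 := by positivity
    exact add_nonneg (hbase_nonneg x y) h0
  have hbddb : ∀ x, BddBelow (Set.range fun y => base x y) := by
    intro x
    exact ⟨0, by rintro r ⟨y, rfl⟩; exact hbase_nonneg x y⟩
  set p : H → ℝ := fun x => ⨅ y : H, base x y with hp
  have hp_nonneg : ∀ x, 0 ≤ p x := fun x => le_ciInf (hbase_nonneg x)
  have hp_le : ∀ k x, p x ≤ QF (Tk k) x := by
    intro k x
    rw [hTkqf k x]
    apply ciInf_mono (hbddb x)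
    intro y
    have : (0:ℝ) ≤ (1 / ((k : ℝ) + 1)) * ‖y‖ ^ 2 := by positivity
    linarith
  have hanti : ∀ x, Antitone fun k => QF (Tk k) x := by
    intro x k l hkl
    show QF (Tk l) x ≤ QF (Tk k) x
    rw [hTkqf k x, hTkqf l x]
    apply ciInf_mono
    · exact ⟨0, by rintro r ⟨y, rfl⟩; exact hFk_nonneg l x y⟩
    · intro y
      have h1 : (1 / ((l : ℝ) + 1)) ≤ (1 / ((k : ℝ) + 1)) := by
        apply one_div_le_one_div_of_le (by positivity)
        have : (k:ℝ) ≤ (l:ℝ) := by exact_mod_cast hkl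
        linarith
      have h2 : (1 / ((l : ℝ) + 1)) * ‖y‖ ^ 2 ≤ (1 / ((k : ℝ) + 1)) * ‖y‖ ^ 2 :=
        mul_le_mul_of_nonneg_right h1 (by positivity)
      linarith
  have htend : ∀ x, Filter.Tendsto (fun k => QF (Tk k) x) Filter.atTop (nhds (p x)) := by
    intro x
    have hbdd : BddBelow (Set.range fun k => QF (Tk k) x) :=
      ⟨0, by rintro r ⟨k, rfl⟩; exact (hTkpos k).qf_nonneg x⟩
    have h1 := tendsto_atTop_ciInf (hanti x) hbdd
    have h2 : (⨅ k : ℕ, QF (Tk k) x) = p x := by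
      apply le_antisymm
      · apply le_of_forall_pos_le_add
        intro δ hδ
        have h3 : p x < p x + δ / 2 := by linarith
        obtain ⟨y, hy⟩ := exists_lt_of_ciInf_lt (h3.trans_le' le_rfl)
        have h4 : Filter.Tendsto (fun k : ℕ => (1 / ((k : ℝ) + 1)) * ‖y‖ ^ 2)
            Filter.atTop (nhds 0) := by
          simpa using tendsto_one_div_add_atTop_nhds_zero_nat.mul_const (‖y‖ ^ 2)
        obtain ⟨k, hk⟩ := (h4.eventually (gt_mem_nhds (half_pos hδ))).exists
        calc (⨅ k : ℕ, QF (Tk k) x) ≤ QF (Tk k) x :=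
              ciInf_le hbdd k
          _ ≤ base x y + (1 / ((k : ℝ) + 1)) * ‖y‖ ^ 2 := by
              rw [hTkqf k x]
              exact ciInf_le ⟨0, by rintro r ⟨z, rfl⟩; exact hFk_nonneg k x z⟩ y
          _ ≤ p x + δ := by linarith
      · exact le_ciInf fun k => hp_le k x
    rwa [h2] at h1
  -- comparison with B
  have hTkB : ∀ k, ∀ x, QF (Tk k) x ≤ QF B x := by
    intro k x
    rw [hTkqf k x]
    calc (⨅ y : H, (base x y + (1 / ((k : ℝ) + 1)) * ‖y‖ ^ 2))
        ≤ base x 0 + (1 / ((k : ℝ) + 1)) * ‖(0:H)‖ ^ 2 :=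
          ciInf_le ⟨0, by rintro r ⟨z, rfl⟩; exact hFk_nonneg k x z⟩ 0
      _ = QF B x := by simp [hbase, QF]
  have hmono : ∀ k l, k ≤ l → OpLe (Tk l) (Tk k) :=
    fun k l hkl => opLe_of_qf_le (hTkpos l) (hTkpos k) (fun x => hanti x hkl)
  have hnormB : (0:ℝ) ≤ ‖B‖ := norm_nonneg B
  -- Cauchy
  have hcauchy : ∀ x, CauchySeq fun k => Tk k x := by
    intro x
    rw [Metric.cauchySeq_iff']
    intro ε hε
    have hq : ∀ᶠ k in Filter.atTop, QF (Tk k) x - p x < ε ^ 2 / (‖B‖ + 1) := by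
      have : Filter.Tendsto (fun k => QF (Tk k) x - p x) Filter.atTop (nhds 0) := by
        simpa using (htend x).sub_const (p x)
      exact this.eventually (gt_mem_nhds (by positivity))
    obtain ⟨N, hN⟩ := hq.exists_forall_of_atTop
    refine ⟨N, fun m hm => ?_⟩
    set d := Tk N - Tk m with hd
    have hdpos : IsPosOp d := hmono N m hm
    have hdB : OpLe d B := by
      apply opLe_of_qf_le hdpos hB
      intro z
      rw [hd, qf_sub]
      have := (hTkpos m).qf_nonneg z
      linarith [hTkB N z]
    have hnd : ‖d‖ ≤ ‖B‖ := norm_le_of_opLe hdpos hdB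
    have h1 : ‖d x‖ ^ 2 ≤ ‖B‖ * (QF (Tk N) x - p x) := by
      calc ‖d x‖ ^ 2 ≤ ‖d‖ * QF d x := hdpos.norm_apply_sq_le x
        _ ≤ ‖B‖ * (QF (Tk N) x - p x) := by
            rw [hd, qf_sub]
            apply mul_le_mul hnd _ _ hnormB
            · linarith [hp_le m x]
            · rw [← qf_sub]; exact hdpos.qf_nonneg x
    have h2 : ‖d x‖ ^ 2 < ε ^ 2 := by
      calc ‖d x‖ ^ 2 ≤ ‖B‖ * (QF (Tk N) x - p x) := h1
        _ ≤ ‖B‖ * (ε ^ 2 / (‖B‖ + 1)) := by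
            apply mul_le_mul_of_nonneg_left (hN N le_rfl).le hnormB
        _ < ε ^ 2 := by
            rw [mul_div_assoc']
            rw [div_lt_iff₀ (by positivity)]
            nlinarith [sq_nonneg ε]
    have h3 : ‖d x‖ < ε := by
      have := lt_of_pow_lt_pow_left₀ 2 hε.le h2
      exact this
    calc dist (Tk m x) (Tk N x) = ‖Tk m x - Tk N x‖ := dist_eq_norm _ _
      _ = ‖d x‖ := by rw [hd]; simp [ContinuousLinearMap.sub_apply, norm_sub_rev]
      _ < ε := h3
  have hconv : ∀ x, ∃ z, Filter.Tendsto (fun k => Tk k x) Filter.atTop (nhds z) :=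
    fun x => cauchySeq_tendsto_of_complete (hcauchy x)
  set g : H → H := fun x => (hconv x).choose with hg
  have hgt : ∀ x, Filter.Tendsto (fun k => Tk k x) Filter.atTop (nhds (g x)) :=
    fun x => (hconv x).choose_spec
  have hgadd : ∀ x y, g (x + y) = g x + g y := by
    intro x y
    refine tendsto_nhds_unique (hgt (x + y)) ?_
    have : (fun k => Tk k (x + y)) = fun k => Tk k x + Tk k y := by
      funext k; rw [map_add]
    rw [this]
    exact (hgt x).add (hgt y)
  have hgsmul : ∀ (c : ℂ) x, g (c • x) = c • g x := by
    intro c x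
    refine tendsto_nhds_unique (hgt (c • x)) ?_
    have : (fun k => Tk k (c • x)) = fun k => c • Tk k x := by
      funext k; rw [map_smul]
    rw [this]
    exact (hgt x).const_smul c
  have hgnorm : ∀ x, ‖g x‖ ≤ ‖B‖ * ‖x‖ := by
    intro x
    apply le_of_tendsto (hgt x).norm
    filter_upwards with k
    calc ‖Tk k x‖ ≤ ‖Tk k‖ * ‖x‖ := (Tk k).le_opNorm x
      _ ≤ ‖B‖ * ‖x‖ := by
          apply mul_le_mul_of_nonneg_right _ (norm_nonneg x)
          exact norm_le_of_opLe (hTkpos k) (opLe_of_qf_le (hTkpos k) hB (hTkB k))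
  set Tlin : H →ₗ[ℂ] H :=
    { toFun := g, map_add' := hgadd, map_smul' := hgsmul } with hTlin
  set T : H →L[ℂ] H := LinearMap.mkContinuous Tlin ‖B‖ hgnorm with hT
  have hTapp : ∀ x, T x = g x := fun x => rfl
  have hTinner : ∀ x, (inner ℂ (T x) x : ℂ) = ((p x : ℝ) : ℂ) := by
    intro x
    have t1 : Filter.Tendsto (fun k => (inner ℂ (Tk k x) x : ℂ)) Filter.atTop
        (nhds (inner ℂ (T x) x)) := by
      rw [hTapp]
      exact (hgt x).inner tendsto_const_nhds
    have t2 : Filter.Tendsto (fun k => (inner ℂ (Tk k x) x : ℂ)) Filter.atTop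
        (nhds ((p x : ℝ) : ℂ)) := by
      have : (fun k => (inner ℂ (Tk k x) x : ℂ)) = fun k => ((QF (Tk k) x : ℝ) : ℂ) := by
        funext k; exact (hTkpos k).inner_eq x
      rw [this]
      exact (Complex.continuous_ofReal.tendsto _).comp (htend x)
    exact tendsto_nhds_unique t1 t2
  refine ⟨T, ?_, ?_⟩
  · intro x
    rw [hTinner x, Complex.zero_le_real]
    exact hp_nonneg x
  · intro x
    have : QF T x = ((p x : ℝ) : ℂ).re := by rw [QF, hTinner x]
    rw [this, Complex.ofReal_re]

end Parallel

lemma sq_add_le_aux {a b ε : ℝ} (hε : 0 < ε) :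
    (a + b) ^ 2 ≤ (1 + ε) * a ^ 2 + (1 + 1 / ε) * b ^ 2 := by
  rw [← mul_le_mul_iff_of_pos_right hε]
  have h2 : ((1 + ε) * a ^ 2 + (1 + 1 / ε) * b ^ 2) * ε
      = (1 + ε) * a ^ 2 * ε + (ε + 1) * b ^ 2 := by
    field_simp
    try ring
  rw [h2]
  nlinarith [sq_nonneg (ε * a - b)]

section Main
variable {H : Type*} [NormedAddCommGroup H] [InnerProductSpace ℂ H] [CompleteSpace H]

lemma tendsto_apply_of_qf_tendsto {T : H →L[ℂ] H} {Tn : ℕ → H →L[ℂ] H} (hT : IsPosOp T)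
    (hTn : ∀ n, IsPosOp (Tn n)) (hle : ∀ n, OpLe (Tn n) T)
    (h : ∀ x, Filter.Tendsto (fun n => QF (Tn n) x) Filter.atTop (nhds (QF T x))) (x : H) :
    Filter.Tendsto (fun n => Tn n x) Filter.atTop (nhds (T x)) := by
  have hD : ∀ n, IsPosOp (T - Tn n) := hle
  have hDS : ∀ n, OpLe (T - Tn n) T := fun n =>
    opLe_of_qf_le (hD n) hT (fun z => by rw [qf_sub]; linarith [(hTn n).qf_nonneg z])
  have hnorm : ∀ n, ‖T - Tn n‖ ≤ ‖T‖ := fun n => norm_le_of_opLe (hD n) (hDS n)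
  have hsq : Filter.Tendsto (fun n => ‖(T - Tn n) x‖ ^ 2) Filter.atTop (nhds 0) := by
    apply squeeze_zero (fun n => by positivity)
      (g := fun n => ‖T‖ * (QF T x - QF (Tn n) x))
    · intro n
      calc ‖(T - Tn n) x‖ ^ 2 ≤ ‖T - Tn n‖ * QF (T - Tn n) x := (hD n).norm_apply_sq_le x
        _ ≤ ‖T‖ * (QF T x - QF (Tn n) x) := by
            have h1 : QF (T - Tn n) x = QF T x - QF (Tn n) x := qf_sub T (Tn n) x
            have h2 : 0 ≤ QF (T - Tn n) x := (hD n).qf_nonneg x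
            rw [h1]
            apply mul_le_mul (hnorm n) le_rfl _ (norm_nonneg T)
            linarith [h1 ▸ h2]
    · have h3 : Filter.Tendsto (fun n => ‖T‖ * (QF T x - QF (Tn n) x)) Filter.atTop
          (nhds (‖T‖ * (QF T x - QF T x))) :=
        tendsto_const_nhds.mul (tendsto_const_nhds.sub (h x))
      simpa using h3
  have hnorm0 : Filter.Tendsto (fun n => ‖(T - Tn n) x‖) Filter.atTop (nhds 0) := by
    have h2 := (Real.continuous_sqrt.tendsto 0).comp hsq
    simp only [Function.comp_def, Real.sqrt_sq (norm_nonneg _), Real.sqrt_zero] at h2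
    exact h2
  rw [tendsto_iff_norm_sub_tendsto_zero]
  have : (fun n => ‖Tn n x - T x‖) = fun n => ‖(T - Tn n) x‖ := by
    funext n
    rw [ContinuousLinearMap.sub_apply, norm_sub_rev]
  rw [this]
  exact hnorm0

theorem generalized_short_is_lebesgue_decomposition'
    (A B S : H →L[ℂ] H) (hA : IsPosOp A) (hB : IsPosOp B) (hS : IsPosOp S)
    (hshort : IsShort A B S) :
    OpLe S B ∧ AbsCont S A ∧ SingOp (B - S) A ∧
      ∀ C : H →L[ℂ] H, IsPosOp C → OpLe C B → AbsCont C A → OpLe C S := by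
  have hex := exists_parallel hA hB
  choose Tn hTnpos hTnqf using hex
  set p : ℕ → H → ℝ := fun n x => ⨅ y : H, (QF B (x - y) + (n : ℝ) * QF A y) with hpdef
  have hSsup : ∀ x, QF S x = ⨆ n : ℕ, p n x := fun x => hshort x
  have hbase_nonneg : ∀ (n : ℕ) (x y : H), 0 ≤ QF B (x - y) + (n : ℝ) * QF A y := fun n x y =>
    add_nonneg (hB.qf_nonneg _) (mul_nonneg (Nat.cast_nonneg n) (hA.qf_nonneg _))
  have hbddb : ∀ (n : ℕ) (x : H), BddBelow (Set.range fun y => QF B (x - y) + (n : ℝ) * QF A y) :=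
    fun n x => ⟨0, by rintro r ⟨y, rfl⟩; exact hbase_nonneg n x y⟩
  have hp_nonneg : ∀ n x, 0 ≤ p n x := fun n x => le_ciInf (hbase_nonneg n x)
  have hp_le_B : ∀ n x, p n x ≤ QF B x := by
    intro n x
    calc p n x ≤ QF B (x - 0) + (n : ℝ) * QF A 0 := ciInf_le (hbddb n x) 0
      _ = QF B x := by simp [QF]
  have hp_le_nA : ∀ n x, p n x ≤ (n : ℝ) * QF A x := by
    intro n x
    calc p n x ≤ QF B (x - x) + (n : ℝ) * QF A x := ciInf_le (hbddb n x) x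
      _ = (n : ℝ) * QF A x := by simp [QF]
  have hp_mono : ∀ x, Monotone fun n => p n x := by
    intro x n m hnm
    show p n x ≤ p m x
    apply ciInf_mono (hbddb n x)
    intro y
    have : (n : ℝ) * QF A y ≤ (m : ℝ) * QF A y :=
      mul_le_mul_of_nonneg_right (by exact_mod_cast hnm) (hA.qf_nonneg y)
    linarith
  have hbddA : ∀ x, BddAbove (Set.range fun n : ℕ => p n x) :=
    fun x => ⟨QF B x, by rintro r ⟨n, rfl⟩; exact hp_le_B n x⟩
  have hp_le_S : ∀ n x, p n x ≤ QF S x := by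
    intro n x
    rw [hSsup x]
    exact le_ciSup (hbddA x) n
  have htendp : ∀ x, Filter.Tendsto (fun n => p n x) Filter.atTop (nhds (QF S x)) := by
    intro x
    rw [hSsup x]
    exact tendsto_atTop_ciSup (hp_mono x) (hbddA x)
  -- Claim 1 : S ≤ B
  have claim1 : OpLe S B := by
    apply opLe_of_qf_le hS hB
    intro x
    rw [hSsup x]
    exact ciSup_le fun n => hp_le_B n x
  -- Key lemma for maximality
  have hkey : ∀ (T : H →L[ℂ] H) (c : ℝ), IsPosOp T → 0 ≤ c →
      (∀ x, QF T x ≤ QF B x) → (∀ x, QF T x ≤ c * QF A x) → ∀ x, QF T x ≤ QF S x := by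
    intro T c hT hc hTB hTA x
    apply le_of_forall_pos_le_add
    intro δ hδ
    have hQ : 0 ≤ QF S x := hS.qf_nonneg x
    set ε : ℝ := δ / (QF S x + 1) with hεdef
    have hε : 0 < ε := by positivity
    set n : ℕ := ⌈c * (1 + 1 / ε)⌉₊ with hn
    have hcn : c * (1 + 1 / ε) ≤ (n : ℝ) := Nat.le_ceil _
    have hy : ∀ y : H, QF T x ≤ (1 + ε) * (QF B (x - y) + (n : ℝ) * QF A y) := by
      intro y
      have t := hT.sqrt_qf_triangle x y
      have e1 : QF T x ≤ (Real.sqrt (QF T (x - y)) + Real.sqrt (QF T y)) ^ 2 := by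
        calc QF T x = Real.sqrt (QF T x) ^ 2 := (Real.sq_sqrt (hT.qf_nonneg x)).symm
          _ ≤ _ := by
              apply pow_le_pow_left₀ (Real.sqrt_nonneg _) t
      have e2 : (Real.sqrt (QF T (x - y)) + Real.sqrt (QF T y)) ^ 2
          ≤ (1 + ε) * QF T (x - y) + (1 + 1 / ε) * QF T y := by
        have := sq_add_le_aux (a := Real.sqrt (QF T (x - y))) (b := Real.sqrt (QF T y)) hε
        rwa [Real.sq_sqrt (hT.qf_nonneg (x - y)), Real.sq_sqrt (hT.qf_nonneg y)] at this
      have e3 : (1 + ε) * QF T (x - y) + (1 + 1 / ε) * QF T y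
          ≤ (1 + ε) * QF B (x - y) + (1 + 1 / ε) * (c * QF A y) := by
        have h1 : (1 + ε) * QF T (x - y) ≤ (1 + ε) * QF B (x - y) :=
          mul_le_mul_of_nonneg_left (hTB (x - y)) (by positivity)
        have h2 : (1 + 1 / ε) * QF T y ≤ (1 + 1 / ε) * (c * QF A y) :=
          mul_le_mul_of_nonneg_left (hTA y) (by positivity)
        linarith
      have e4 : (1 + 1 / ε) * (c * QF A y) ≤ (1 + ε) * ((n : ℝ) * QF A y) := by
        have h1 : (1 + 1 / ε) * c ≤ (n : ℝ) := by
          calc (1 + 1 / ε) * c = c * (1 + 1 / ε) := by ring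
            _ ≤ (n : ℝ) := hcn
        have h2 : (n : ℝ) ≤ (1 + ε) * (n : ℝ) := by nlinarith [Nat.cast_nonneg (α := ℝ) n]
        calc (1 + 1 / ε) * (c * QF A y) = ((1 + 1 / ε) * c) * QF A y := by ring
          _ ≤ (n : ℝ) * QF A y := mul_le_mul_of_nonneg_right h1 (hA.qf_nonneg y)
          _ ≤ ((1 + ε) * (n : ℝ)) * QF A y :=
              mul_le_mul_of_nonneg_right h2 (hA.qf_nonneg y)
          _ = (1 + ε) * ((n : ℝ) * QF A y) := by ring
      calc QF T x ≤ (1 + ε) * QF T (x - y) + (1 + 1 / ε) * QF T y := e1.trans e2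
        _ ≤ (1 + ε) * QF B (x - y) + (1 + ε) * ((n : ℝ) * QF A y) := by linarith
        _ = (1 + ε) * (QF B (x - y) + (n : ℝ) * QF A y) := by ring
    have h5 : QF T x / (1 + ε) ≤ p n x := by
      apply le_ciInf
      intro y
      rw [div_le_iff₀ (by positivity)]
      calc QF T x ≤ (1 + ε) * (QF B (x - y) + (n : ℝ) * QF A y) := hy y
        _ = (QF B (x - y) + (n : ℝ) * QF A y) * (1 + ε) := by ring
    have h6 : QF T x ≤ (1 + ε) * QF S x := by
      rw [div_le_iff₀ (by positivity)] at h5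
      calc QF T x ≤ p n x * (1 + ε) := h5.trans
            (mul_le_mul_of_nonneg_right le_rfl (by positivity))
        _ ≤ QF S x * (1 + ε) := mul_le_mul_of_nonneg_right (hp_le_S n x) (by positivity)
        _ = (1 + ε) * QF S x := by ring
    have h7 : ε * QF S x ≤ δ := by
      have h8 : ε * (QF S x + 1) = δ := by
        rw [hεdef]
        field_simp
      nlinarith [hε.le]
    linarith [h6]
  -- Claim 2 : S is A-absolutely continuous via Tn
  have hTn_le_S : ∀ n, OpLe (Tn n) S :=
    fun n => opLe_of_qf_le (hTnpos n) hS (fun x => (hTnqf n x) ▸ hp_le_S n x)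
  have htendQF : ∀ x, Filter.Tendsto (fun n => QF (Tn n) x) Filter.atTop (nhds (QF S x)) := by
    intro x
    have : (fun n => QF (Tn n) x) = fun n => p n x := by
      funext n; exact hTnqf n x
    rw [this]
    exact htendp x
  have htendS : ∀ x, Filter.Tendsto (fun n => Tn n x) Filter.atTop (nhds (S x)) :=
    tendsto_apply_of_qf_tendsto hS hTnpos hTn_le_S htendQF
  have hTnmono : ∀ m n, m ≤ n → OpLe (Tn m) (Tn n) := by
    intro m n hmn
    apply opLe_of_qf_le (hTnpos m) (hTnpos n)
    intro x
    rw [hTnqf m x, hTnqf n x]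
    exact hp_mono x hmn
  have hTn_dom : ∀ n : ℕ, OpLe (Tn n) ((n : ℝ) • A) := by
    intro n
    apply opLe_of_qf_le (hTnpos n) (isPosOp_smul (Nat.cast_nonneg n) hA)
    intro x
    rw [hTnqf n x, qf_smul_real]
    exact hp_le_nA n x
  have claim2 : AbsCont S A :=
    ⟨Tn, hTnpos, hTnmono, fun n => ⟨(n : ℝ), Nat.cast_nonneg n, hTn_dom n⟩, htendS⟩
  -- Claim 4 : maximality
  have claim4 : ∀ C : H →L[ℂ] H, IsPosOp C → OpLe C B → AbsCont C A → OpLe C S := by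
    rintro C hC hCB ⟨Cm, hC1, hC2, hC3, hC4⟩
    have hqC : ∀ x, Filter.Tendsto (fun m => QF (Cm m) x) Filter.atTop (nhds (QF C x)) := by
      intro x
      have h1 : Filter.Tendsto (fun m => (inner ℂ (Cm m x) x : ℂ)) Filter.atTop
          (nhds (inner ℂ (C x) x)) := (hC4 x).inner tendsto_const_nhds
      exact (Complex.continuous_re.tendsto _).comp h1
    have hCmC : ∀ m x, QF (Cm m) x ≤ QF C x := fun m x =>
      ge_of_tendsto (hqC x) (Filter.eventually_atTop.mpr
        ⟨m, fun k hk => (hC2 m k hk).qf_le x⟩)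
    have hCmS : ∀ m x, QF (Cm m) x ≤ QF S x := by
      intro m
      obtain ⟨c, hc0, hcA⟩ := hC3 m
      apply hkey (Cm m) c (hC1 m) hc0
      · intro x
        exact (hCmC m x).trans (hCB.qf_le x)
      · intro x
        have := hcA.qf_le x
        rwa [qf_smul_real] at this
    have hCS : ∀ x, QF C x ≤ QF S x := fun x =>
      le_of_tendsto (hqC x) (Filter.Eventually.of_forall fun m => hCmS m x)
    exact opLe_of_qf_le hC hS hCS
  -- Claim 3 : singularity
  have claim3 : SingOp (B - S) A := by
    intro C hC hCBS hCA
    have hSC : IsPosOp (S + C) := isPosOp_add hS hC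
    have hSCB : OpLe (S + C) B := by
      have h0 : B - (S + C) = B - S - C := by abel
      show IsPosOp (B - (S + C))
      rw [h0]
      exact hCBS
    have hACsc : AbsCont (S + C) A := by
      refine ⟨fun n => Tn n + C, fun n => isPosOp_add (hTnpos n) hC, ?_, ?_, ?_⟩
      · intro m n hmn
        show IsPosOp (Tn n + C - (Tn m + C))
        have h0 : Tn n + C - (Tn m + C) = Tn n - Tn m := by abel
        rw [h0]
        exact hTnmono m n hmn
      · intro n
        refine ⟨(n : ℝ) + 1, by positivity, ?_⟩
        apply opLe_of_qf_le (isPosOp_add (hTnpos n) hC)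
          (isPosOp_smul (by positivity) hA)
        intro x
        rw [qf_add, qf_smul_real, hTnqf n x]
        have h1 : QF C x ≤ QF A x := hCA.qf_le x
        have h2 : p n x ≤ (n : ℝ) * QF A x := hp_le_nA n x
        linarith
      · intro x
        have : (fun n => (Tn n + C) x) = fun n => Tn n x + C x := by
          funext n; rfl
        rw [this]
        have h1 := (htendS x).add (tendsto_const_nhds (x := C x))
        simpa using h1
    have hfin : OpLe (S + C) S := claim4 (S + C) hSC hSCB hACsc
    have hC0 : ∀ x, (inner ℂ (C x) x : ℂ) = 0 := by
      intro x
      have h1 := hfin x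
      have h0 : S - (S + C) = -C := by abel
      rw [h0] at h1
      have h2 : (inner ℂ ((-C) x) x : ℂ) = -(inner ℂ (C x) x : ℂ) := by
        simp [inner_neg_left]
      rw [h2] at h1
      have h3 := hC x
      have h4 : (inner ℂ (C x) x : ℂ) ≤ 0 := by
        rwa [neg_nonneg] at h1
      exact le_antisymm h4 h3
    have h5 : (↑C : H →ₗ[ℂ] H) = 0 := (inner_map_self_eq_zero _).mp hC0
    apply ContinuousLinearMap.coe_injective
    rw [h5]
    rfl
  exact ⟨claim1, claim2, claim3, claim4⟩

end Main

theorem generalized_short_is_lebesgue_decomposition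
    {H : Type*} [NormedAddCommGroup H] [InnerProductSpace ℂ H] [CompleteSpace H]
    (A B S : H →L[ℂ] H) (hA : IsPosOp A) (hB : IsPosOp B) (hS : IsPosOp S)
    (hshort : IsShort A B S) :
    OpLe S B ∧ AbsCont S A ∧ SingOp (B - S) A ∧
      ∀ C : H →L[ℂ] H, IsPosOp C → OpLe C B → AbsCont C A → OpLe C S := by
  exact generalized_short_is_lebesgue_decomposition' A B S hA hB hS hshort
end

section
/- Let A and B be positive bounded operators on a complex Hilbert space H with A ≤ B, and let S be a positive operator such that S[x] = sup_{n∈ℕ} inf_{y∈H} (B[x−y] + n·A[y]) for all x ∈ H (i.e. S = [A]B). Then A = S if and only if A and B − A are singular. -/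
open scoped ComplexOrder

namespace QUAux

variable {H : Type*} [NormedAddCommGroup H] [InnerProductSpace ℂ H]

local notation "⟪" x ", " y "⟫" => (inner ℂ x y : ℂ)

/-- symmetric operator -/
def Symm (T : H →L[ℂ] H) : Prop := ∀ x y : H, ⟪T x, y⟫ = ⟪x, T y⟫

/-- real bilinear form -/
noncomputable def bf (T : H →L[ℂ] H) (x y : H) : ℝ := (⟪T x, y⟫).re

variable {P T A B : H →L[ℂ] H}

lemma qf_nonneg (h : IsPosOp P) (x : H) : 0 ≤ QF P x := by
  have := (Complex.le_def.mp (h x)).1; simpa [QF] using this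

lemma im_zero (h : IsPosOp P) (x : H) : (⟪P x, x⟫).im = 0 := by
  have := (Complex.le_def.mp (h x)).2; simpa using this.symm

lemma inner_real_of_pos (h : IsPosOp P) (x : H) : ⟪P x, x⟫ = ((QF P x : ℝ) : ℂ) := by
  apply Complex.ext
  · simp [QF]
  · simp [im_zero h x]

lemma symm_of_pos (h : IsPosOp P) : Symm P := by
  have : (P : H →ₗ[ℂ] H).IsSymmetric := by
    rw [LinearMap.isSymmetric_iff_inner_map_self_real]
    intro v
    rw [show (inner ℂ ((P : H →ₗ[ℂ] H) v) v : ℂ) = ⟪P v, v⟫ from rfl, inner_real_of_pos h v]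
    simp
  intro x y
  exact this x y

lemma Symm.inner_real (hT : Symm T) (x : H) : ⟪T x, x⟫ = ((QF T x : ℝ) : ℂ) := by
  have h1 : (starRingEnd ℂ) ⟪T x, x⟫ = ⟪T x, x⟫ := by
    rw [inner_conj_symm]; exact (hT x x).symm
  have h2 := Complex.conj_eq_iff_re.mp h1
  rw [← h2]; rfl

lemma Symm.sub (hT : Symm T) (hP : Symm P) : Symm (T - P) := by
  intro x y
  simp only [ContinuousLinearMap.sub_apply, inner_sub_left, inner_sub_right, hT x y, hP x y]

lemma isPosOp_of_symm (hT : Symm T) (h : ∀ x, 0 ≤ QF T x) : IsPosOp T := by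
  intro x
  rw [hT.inner_real x]
  exact Complex.zero_le_real.mpr (h x)

lemma eq_zero_of_qf (hT : Symm T) (h : ∀ x, QF T x = 0) : T = 0 := by
  have hz : ∀ x : H, ⟪T x, x⟫ = 0 := by
    intro x; rw [hT.inner_real x, h x]; simp
  have : (T : H →ₗ[ℂ] H) = 0 := (inner_map_self_eq_zero _).mp hz
  ext x
  exact congrArg (fun (f : H →ₗ[ℂ] H) => f x) this

lemma bf_comm (hT : Symm T) (x y : H) : bf T x y = bf T y x := by
  unfold bf
  rw [hT y x]
  exact inner_re_symm (𝕜 := ℂ) _ _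

lemma qf_add (hT : Symm T) (x y : H) :
    QF T (x + y) = QF T x + 2 * bf T x y + QF T y := by
  unfold QF bf
  rw [map_add, inner_add_left, inner_add_right, inner_add_right]
  have : (⟪T y, x⟫).re = (⟪T x, y⟫).re := by
    rw [hT y x]; exact inner_re_symm (𝕜 := ℂ) _ _
  simp [this]; ring

lemma qf_sub (hT : Symm T) (x y : H) :
    QF T (x - y) = QF T x - 2 * bf T x y + QF T y := by
  unfold QF bf
  rw [map_sub, inner_sub_left, inner_sub_right, inner_sub_right]
  have : (⟪T y, x⟫).re = (⟪T x, y⟫).re := by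
    rw [hT y x]; exact inner_re_symm (𝕜 := ℂ) _ _
  simp [this]; ring

lemma qf_smul_real (T : H →L[ℂ] H) (t : ℝ) (x : H) :
    QF T (t • x) = t ^ 2 * QF T x := by
  unfold QF
  have : (t : ℂ) • x = t • x := by simp [Complex.coe_smul]
  rw [← this, map_smul, inner_smul_left, inner_smul_right]
  simp [Complex.mul_re]
  ring

lemma bf_smul_left (T : H →L[ℂ] H) (t : ℝ) (x y : H) :
    bf T (t • x) y = t * bf T x y := by
  unfold bf
  have : (t : ℂ) • x = t • x := by simp [Complex.coe_smul]
  rw [← this, map_smul, inner_smul_left]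
  simp [Complex.mul_re]

lemma cs (hT : Symm T) (h : ∀ z, 0 ≤ QF T z) (x y : H) :
    (bf T x y) ^ 2 ≤ QF T x * QF T y := by
  have key : ∀ t : ℝ, 0 ≤ QF T x * (t * t) + (2 * bf T x y) * t + QF T y := by
    intro t
    have h0 := h (t • x + y)
    rw [qf_add hT, qf_smul_real, bf_smul_left] at h0
    nlinarith [h0]
  have hd := discrim_le_zero key
  unfold discrim at hd
  nlinarith [hd]

lemma cs_sqrt (hT : Symm T) (h : ∀ z, 0 ≤ QF T z) (x y : H) :
    |bf T x y| ≤ Real.sqrt (QF T x) * Real.sqrt (QF T y) := by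
  have := cs hT h x y
  have h1 : |bf T x y| = Real.sqrt ((bf T x y) ^ 2) := by
    rw [Real.sqrt_sq_eq_abs]
  rw [h1, ← Real.sqrt_mul (h x)]
  exact Real.sqrt_le_sqrt this


lemma qf_sub_op (P Q : H →L[ℂ] H) (x : H) : QF (Q - P) x = QF Q x - QF P x := by
  unfold QF
  rw [ContinuousLinearMap.sub_apply, inner_sub_left]
  simp

lemma OpLe.qf (h : OpLe P T) (x : H) : QF P x ≤ QF T x := by
  have := qf_nonneg h x
  rw [qf_sub_op] at this
  linarith

lemma opLe_of_qf (hP : ∀ x, ⟪P x, x⟫ = ((QF P x : ℝ) : ℂ))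
    (hQ : ∀ x, ⟪T x, x⟫ = ((QF T x : ℝ) : ℂ))
    (h : ∀ x, QF P x ≤ QF T x) : OpLe P T := by
  intro x
  have : ⟪(T - P) x, x⟫ = (((QF T x - QF P x : ℝ)) : ℂ) := by
    rw [ContinuousLinearMap.sub_apply, inner_sub_left, hP x, hQ x]
    push_cast
    ring
  rw [this]
  exact Complex.zero_le_real.mpr (by linarith [h x])

lemma qf_zero_op (x : H) : QF (0 : H →L[ℂ] H) x = 0 := by
  unfold QF; simp

lemma qf_zero_vec (T : H →L[ℂ] H) : QF T 0 = 0 := by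
  unfold QF; simp

lemma qf_norm_bound (T : H →L[ℂ] H) (x : H) : QF T x ≤ ‖T‖ * ‖x‖ ^ 2 := by
  have h1 : QF T x ≤ ‖T x‖ * ‖x‖ := re_inner_le_norm (𝕜 := ℂ) (T x) x
  have h2 : ‖T x‖ ≤ ‖T‖ * ‖x‖ := T.le_opNorm x
  nlinarith [norm_nonneg x, norm_nonneg (T x)]

/-- Generalized Cauchy–Schwarz consequence: for symmetric `P` with nonnegative form
dominated by `K * ‖·‖²`, we get `‖P x‖² ≤ K * QF P x`. -/
lemma norm_sq_le_of_qf (hP : Symm P) (h0 : ∀ z, 0 ≤ QF P z) {K : ℝ} (hK : 0 ≤ K)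
    (hPK : ∀ z, QF P z ≤ K * ‖z‖ ^ 2) (x : H) : ‖P x‖ ^ 2 ≤ K * QF P x := by
  have hcs := cs hP h0 x (P x)
  have hb : bf P x (P x) = ‖P x‖ ^ 2 := by
    unfold bf
    rw [inner_self_eq_norm_sq_to_K (𝕜 := ℂ)]
    simp [← Complex.ofReal_pow]
  rw [hb] at hcs
  have h2 : QF P (P x) ≤ K * ‖P x‖ ^ 2 := hPK (P x)
  rcases eq_or_lt_of_le (sq_nonneg ‖P x‖) with he | hlt
  · rw [← he]; exact mul_nonneg hK (h0 x)
  · nlinarith [h0 x, h0 (P x)]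

/-- The key elementary inequality for the lower bound on the short. -/
lemma short_lower_aux (n c u v BV AV : ℝ) (hc : 1 ≤ c) (hn : 0 ≤ n)
    (hu : 0 ≤ u) (hv : 0 ≤ v) (hBV : u ^ 2 ≤ BV) (hAV : v ^ 2 ≤ c * AV) (hAV0 : 0 ≤ AV) :
    n / (n + c) * (u + v) ^ 2 ≤ BV + n * AV := by
  have hnc : 0 < n + c := by linarith
  rw [div_mul_eq_mul_div, div_le_iff₀ hnc]
  have hc0 : 0 < c := by linarith
  rw [← mul_le_mul_iff_right₀ hc0]
  nlinarith [sq_nonneg (c * u - n * v),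
    mul_nonneg (mul_nonneg (sub_nonneg.2 hBV) hc0.le) hnc.le,
    mul_nonneg (mul_nonneg (sub_nonneg.2 hAV) hn) hnc.le]


lemma qf_le_short {S : H →L[ℂ] H} (hA : IsPosOp A) (hB : IsPosOp B)
    (hshort : ∀ x : H, QF S x = ⨆ n : ℕ, ⨅ y : H, (QF B (x - y) + (n : ℝ) * QF A y))
    {T : H →L[ℂ] H} (hT : IsPosOp T) {c : ℝ} (hc : 1 ≤ c)
    (hTB : ∀ z, QF T z ≤ QF B z) (hTA : ∀ z, QF T z ≤ c * QF A z) (x : H) :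
    QF T x ≤ QF S x := by
  rw [hshort x]
  set f : ℕ → ℝ := fun n => ⨅ y : H, (QF B (x - y) + (n : ℝ) * QF A y) with hf
  have hterm_nonneg : ∀ (n : ℕ) (y : H), 0 ≤ QF B (x - y) + (n : ℝ) * QF A y := fun n y =>
    add_nonneg (qf_nonneg hB _) (mul_nonneg (Nat.cast_nonneg n) (qf_nonneg hA _))
  have hbdd_below : ∀ n : ℕ, BddBelow (Set.range fun y : H => QF B (x - y) + (n : ℝ) * QF A y) :=
    fun n => ⟨0, by rintro r ⟨y, rfl⟩; exact hterm_nonneg n y⟩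
  have hf_le : ∀ n, f n ≤ QF B x := by
    intro n
    have := ciInf_le (hbdd_below n) (0 : H)
    simpa [qf_zero_vec] using this
  have hbddA : BddAbove (Set.range f) := ⟨QF B x, by rintro r ⟨n, rfl⟩; exact hf_le n⟩
  have hlow : ∀ n : ℕ, (n : ℝ) / ((n : ℝ) + c) * QF T x ≤ f n := by
    intro n
    apply le_ciInf
    intro y
    set u := Real.sqrt (QF T (x - y)) with hu_def
    set v := Real.sqrt (QF T y) with hv_def
    have hsy := symm_of_pos hT
    have htri : QF T x ≤ (u + v) ^ 2 := by
      have hx : x = (x - y) + y := by abel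
      have hexp : QF T x = QF T (x - y) + 2 * bf T (x - y) y + QF T y := by
        conv_lhs => rw [hx]
        exact qf_add hsy _ _
      have hcs := cs_sqrt hsy (qf_nonneg hT) (x - y) y
      have hu : u ^ 2 = QF T (x - y) := Real.sq_sqrt (qf_nonneg hT _)
      have hv : v ^ 2 = QF T y := Real.sq_sqrt (qf_nonneg hT _)
      have hb : bf T (x - y) y ≤ u * v := le_trans (le_abs_self _) hcs
      nlinarith [hb]
    have hn0 : (0:ℝ) ≤ (n:ℝ) := Nat.cast_nonneg n
    calc (n : ℝ) / ((n:ℝ) + c) * QF T x ≤ (n:ℝ)/((n:ℝ)+c) * (u+v)^2 := by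
          apply mul_le_mul_of_nonneg_left htri (div_nonneg hn0 (by linarith))
      _ ≤ QF B (x - y) + (n:ℝ) * QF A y := by
          apply short_lower_aux _ _ _ _ _ _ hc hn0 (Real.sqrt_nonneg _) (Real.sqrt_nonneg _)
          · rw [Real.sq_sqrt (qf_nonneg hT _)]; exact hTB _
          · rw [Real.sq_sqrt (qf_nonneg hT _)]; exact hTA _
          · exact qf_nonneg hA _
  apply le_of_forall_pos_le_add
  intro ε hε
  obtain ⟨n, hn⟩ := exists_nat_ge (c * QF T x / ε)
  have hc0 : (0:ℝ) < c := by linarith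
  have h1 : c * QF T x ≤ ε * n := by
    rw [div_le_iff₀ hε] at hn; linarith
  have h2 : QF T x - ε ≤ (n : ℝ)/((n:ℝ)+c) * QF T x := by
    have hnc : 0 < (n:ℝ) + c := by have := Nat.cast_nonneg (α := ℝ) n; linarith
    rw [div_mul_eq_mul_div, le_div_iff₀ hnc]
    nlinarith [h1, mul_nonneg hε.le hc0.le]
  calc QF T x ≤ (n:ℝ)/((n:ℝ)+c)*QF T x + ε := by linarith
    _ ≤ f n + ε := by linarith [hlow n]
    _ ≤ (⨆ m, f m) + ε := by gcongr; exact le_ciSup hbddA n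


section Complete
variable [CompleteSpace H]

lemma exists_Ceps (hA : IsPosOp A) (hB : IsPosOp B) {ε : ℝ} (hε : 0 < ε) :
    ∃ C : H →L[ℂ] H, Symm C ∧
      (∀ x y : H, QF C x ≤ QF A (x - y) + QF (B - A) y + ε * ‖y‖ ^ 2) ∧
      (∀ x : H, ∃ y : H, QF C x = QF A (x - y) + QF (B - A) y + ε * ‖y‖ ^ 2) := by
  set M : H →L[ℂ] H := B + (ε : ℂ) • 1 with hM
  have hMapp : ∀ y, M y = B y + (ε:ℂ) • y := by
    intro y; simp [hM]
  have hsymB := symm_of_pos hB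
  have hsymA := symm_of_pos hA
  have hsymM : Symm M := by
    intro x y
    rw [hMapp, hMapp, inner_add_left, inner_add_right, hsymB x y, inner_smul_left,
      inner_smul_right]
    simp [Complex.conj_ofReal]
  have hMqf : ∀ y, QF M y = QF B y + ε * ‖y‖ ^ 2 := by
    intro y
    unfold QF
    rw [hMapp, inner_add_left, inner_smul_left, inner_self_eq_norm_sq_to_K (𝕜 := ℂ)]
    simp [Complex.conj_ofReal, ← Complex.ofReal_pow, ← Complex.ofReal_mul]
  have hMnonneg : ∀ y, 0 ≤ QF M y := by
    intro y
    rw [hMqf y]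
    have := qf_nonneg hB y
    positivity
  have hcoer : ∀ y, ε * ‖y‖ ^ 2 ≤ QF M y := fun y => by
    have := qf_nonneg hB y; rw [hMqf y]; linarith
  have hlower : ∀ y, ε * ‖y‖ ≤ ‖M y‖ := by
    intro y
    rcases eq_or_ne y 0 with rfl | hy
    · simp
    · have h1 : ε * ‖y‖ ^ 2 ≤ ‖M y‖ * ‖y‖ :=
        le_trans (hcoer y) (re_inner_le_norm (𝕜 := ℂ) (M y) y)
      have hy0 : 0 < ‖y‖ := norm_pos_iff.mpr hy
      nlinarith
  set K : NNReal := (⟨ε, hε.le⟩ : NNReal)⁻¹ with hKdef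
  have hKco : (K : ℝ) = ε⁻¹ := rfl
  have hKb : ∀ y, ‖y‖ ≤ (K:ℝ) * ‖M y‖ := by
    intro y
    rw [hKco]
    have h := hlower y
    have he : ‖y‖ = ε⁻¹ * (ε * ‖y‖) := by field_simp
    rw [he]
    exact mul_le_mul_of_nonneg_left h (by positivity)
  have hanti := M.antilipschitz_of_bound hKb
  have hinj : LinearMap.ker (M : H →ₗ[ℂ] H) = ⊥ := (LinearMap.ker_eq_bot (f := (M : H →ₗ[ℂ] H))).mpr hanti.injective
  have hrange : LinearMap.range (M : H →ₗ[ℂ] H) = ⊤ := by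
    haveI : CompleteSpace (LinearMap.range (M : H →ₗ[ℂ] H)) := hanti.completeSpace_range_clm
    rw [← Submodule.orthogonal_eq_bot_iff, Submodule.eq_bot_iff]
    intro v hv
    have h0 : ⟪M v, v⟫ = 0 := hv (M v) (LinearMap.mem_range_self (M : H →ₗ[ℂ] H) v)
    have h1 : ε * ‖v‖ ^ 2 ≤ 0 := by
      have h2 := hcoer v
      unfold QF at h2
      rw [h0] at h2
      simpa using h2
    have h2 : ‖v‖ ^ 2 ≤ 0 := by nlinarith [sq_nonneg ‖v‖]
    have h3 : ‖v‖ ^ 2 = 0 := le_antisymm h2 (sq_nonneg _)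
    have h4 : ‖v‖ = 0 := by
      have := pow_eq_zero_iff (n := 2) (by norm_num) |>.mp h3
      exact this
    exact norm_eq_zero.mp h4
  set E := ContinuousLinearEquiv.ofBijective M hinj hrange with hE
  set R : H →L[ℂ] H := (E.symm : H →L[ℂ] H) with hR
  have hMR : ∀ z, M (R z) = z := by
    intro z
    have : M (E.symm z) = z := E.apply_symm_apply z
    simpa [hR] using this
  have hsymR : Symm R := by
    intro x y
    have h := hsymM (R x) (R y)
    rw [hMR, hMR] at h
    exact h.symm
  set C : H →L[ℂ] H := A - A.comp (R.comp A) with hC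
  have hsymARA : Symm (A.comp (R.comp A)) := by
    intro x y
    simp only [ContinuousLinearMap.comp_apply]
    rw [hsymA (R (A x)) y, hsymR (A x) (A y), ← hsymA x (R (A y))]
  have hsymC : Symm C := hsymA.sub hsymARA
  -- key identity
  have key : ∀ x y : H, QF A (x - y) + QF (B - A) y + ε * ‖y‖ ^ 2
      = QF C x + QF M (y - R (A x)) := by
    intro x y
    set y₀ := R (A x) with hy₀
    have hDy : QF (B - A) y = QF B y - QF A y := qf_sub_op A B y
    have hAxy : QF A (x - y) = QF A x - 2 * bf A x y + QF A y := qf_sub hsymA x y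
    have hCx : QF C x = QF A x - (⟪A y₀, x⟫).re := by
      rw [hC, qf_sub_op]
      unfold QF
      simp only [ContinuousLinearMap.comp_apply]
      rfl
    have hMy : QF M (y - y₀) = QF M y - 2 * bf M y y₀ + QF M y₀ := qf_sub hsymM y y₀
    have hb1 : bf M y y₀ = bf A x y := by
      unfold bf
      have h1 : ⟪M y, y₀⟫ = ⟪y, A x⟫ := by rw [hsymM y y₀, hy₀, hMR]
      rw [h1]
      exact inner_re_symm (𝕜 := ℂ) y (A x)
    have hb2 : QF M y₀ = (⟪A y₀, x⟫).re := by
      have h1 : ⟪M y₀, y₀⟫ = ⟪A x, y₀⟫ := by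
        conv_lhs => rw [hy₀, hMR]
      unfold QF
      rw [h1, hsymA y₀ x]
      exact inner_re_symm (𝕜 := ℂ) (A x) y₀
    rw [hDy, hAxy, hCx, hMy, hb1, hb2, hMqf y]
    ring
  refine ⟨C, hsymC, ?_, ?_⟩
  · intro x y
    rw [key x y]
    have := hMnonneg (y - R (A x))
    linarith
  · intro x
    refine ⟨R (A x), ?_⟩
    rw [key x (R (A x)), sub_self, qf_zero_vec]
    ring

lemma sing_inf_small (hA : IsPosOp A) (hB : IsPosOp B) (hAB : OpLe A B)
    (hsing : SingOp A (B - A)) (x : H) {δ : ℝ} (hδ : 0 < δ) :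
    ∃ y : H, QF A (x - y) + QF (B - A) y < δ := by
  have hD : IsPosOp (B - A) := hAB
  have heps : ∀ n : ℕ, (0:ℝ) < 1 / ((n:ℝ) + 1) := fun n => by positivity
  choose Cn hsym h1 h2 using fun n : ℕ => exists_Ceps (ε := 1 / ((n:ℝ) + 1)) hA hB (heps n)
  have hnonneg : ∀ n z, 0 ≤ QF (Cn n) z := by
    intro n z
    obtain ⟨y, hy⟩ := h2 n z
    rw [hy]
    have := qf_nonneg hA (z - y); have := qf_nonneg hD y
    have : (0:ℝ) ≤ 1 / ((n:ℝ)+1) * ‖y‖ ^ 2 := by positivity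
    linarith
  have hleA : ∀ n z, QF (Cn n) z ≤ QF A z := by
    intro n z
    have := h1 n z 0
    simpa [qf_zero_vec] using this
  have hleD : ∀ n z, QF (Cn n) z ≤ QF (B - A) z + 1 / ((n:ℝ)+1) * ‖z‖ ^ 2 := by
    intro n z
    have := h1 n z z
    simpa [qf_zero_vec] using this
  have hmono : ∀ m n : ℕ, m ≤ n → ∀ z, QF (Cn n) z ≤ QF (Cn m) z := by
    intro m n hmn z
    obtain ⟨y, hy⟩ := h2 m z
    have hle : (1:ℝ) / ((n:ℝ)+1) ≤ 1 / ((m:ℝ)+1) := by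
      apply one_div_le_one_div_of_le (by positivity)
      have : (m:ℝ) ≤ (n:ℝ) := Nat.cast_le.mpr hmn
      linarith
    calc QF (Cn n) z ≤ QF A (z - y) + QF (B - A) y + 1/((n:ℝ)+1) * ‖y‖^2 := h1 n z y
      _ ≤ QF A (z - y) + QF (B - A) y + 1/((m:ℝ)+1) * ‖y‖^2 := by
          have : (0:ℝ) ≤ ‖y‖^2 := sq_nonneg _
          nlinarith
      _ = QF (Cn m) z := hy.symm
  set L : H → ℝ := fun z => ⨅ n : ℕ, QF (Cn n) z with hLdef
  have hbddb : ∀ z, BddBelow (Set.range fun n => QF (Cn n) z) :=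
    fun z => ⟨0, by rintro r ⟨n, rfl⟩; exact hnonneg n z⟩
  have hanti : ∀ z, Antitone (fun n => QF (Cn n) z) := fun z m n h => hmono m n h z
  have htendL : ∀ z, Filter.Tendsto (fun n => QF (Cn n) z) Filter.atTop (nhds (L z)) :=
    fun z => tendsto_atTop_ciInf (hanti z) (hbddb z)
  have hLnn : ∀ z, 0 ≤ L z := fun z => le_ciInf (fun n => hnonneg n z)
  have hLle : ∀ n z, L z ≤ QF (Cn n) z := fun n z => ciInf_le (hbddb z) n
  -- norm estimate for differences
  have hns : ∀ m n : ℕ, m ≤ n → ∀ z, ‖(Cn m) z - (Cn n) z‖ ^ 2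
      ≤ ‖A‖ * (QF (Cn m) z - QF (Cn n) z) := by
    intro m n hmn z
    have hsymP : Symm (Cn m - Cn n) := (hsym m).sub (hsym n)
    have h0 : ∀ w, 0 ≤ QF (Cn m - Cn n) w := by
      intro w; rw [qf_sub_op]; linarith [hmono m n hmn w]
    have hPK : ∀ w, QF (Cn m - Cn n) w ≤ ‖A‖ * ‖w‖ ^ 2 := by
      intro w; rw [qf_sub_op]
      have := hleA m w; have := hnonneg n w; have := qf_norm_bound A w
      linarith
    have := norm_sq_le_of_qf hsymP h0 (norm_nonneg A) hPK z
    rw [ContinuousLinearMap.sub_apply, qf_sub_op] at this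
    exact this
  -- pointwise norm bound
  have hnb : ∀ n z, ‖(Cn n) z‖ ≤ ‖A‖ * ‖z‖ := by
    intro n z
    have hsymP : Symm (Cn n) := hsym n
    have hPK : ∀ w, QF (Cn n) w ≤ ‖A‖ * ‖w‖ ^ 2 := fun w =>
      le_trans (hleA n w) (qf_norm_bound A w)
    have h := norm_sq_le_of_qf hsymP (hnonneg n) (norm_nonneg A) hPK z
    have h2' : QF (Cn n) z ≤ ‖A‖ * ‖z‖ ^ 2 := hPK z
    have hnsq : ‖(Cn n) z‖ ^ 2 ≤ (‖A‖ * ‖z‖) ^ 2 := by nlinarith [norm_nonneg A, norm_nonneg z]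
    calc ‖(Cn n) z‖ = Real.sqrt (‖(Cn n) z‖ ^ 2) := (Real.sqrt_sq (norm_nonneg _)).symm
      _ ≤ Real.sqrt ((‖A‖ * ‖z‖) ^ 2) := Real.sqrt_le_sqrt hnsq
      _ = ‖A‖ * ‖z‖ := Real.sqrt_sq (by positivity)
  have hCauchy : ∀ z, CauchySeq (fun n => (Cn n) z) := by
    intro z
    rw [Metric.cauchySeq_iff]
    intro ε hε
    have hca : CauchySeq (fun n => QF (Cn n) z) := (htendL z).cauchySeq
    rw [Metric.cauchySeq_iff] at hca
    obtain ⟨N, hN⟩ := hca (ε ^ 2 / (‖A‖ + 1)) (by positivity)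
    have key : ∀ p q : ℕ, N ≤ p → N ≤ q → p ≤ q → dist ((Cn p) z) ((Cn q) z) < ε := by
      intro p q hp hq hpq
      have h1 := hns p q hpq z
      have h2 := hN p hp q hq
      rw [Real.dist_eq, abs_sub_lt_iff] at h2
      have h3 : ‖(Cn p) z - (Cn q) z‖ ^ 2 < ε ^ 2 := by
        have hA1 : (0:ℝ) < ‖A‖ + 1 := by positivity
        have : ‖A‖ * (QF (Cn p) z - QF (Cn q) z) ≤ ‖A‖ * (ε ^ 2 / (‖A‖ + 1)) :=
          mul_le_mul_of_nonneg_left (le_of_lt h2.1) (norm_nonneg A)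
        have hfr : ‖A‖ * (ε ^ 2 / (‖A‖ + 1)) < ε ^ 2 := by
          rw [mul_div_assoc']
          rw [div_lt_iff₀ hA1]
          nlinarith [norm_nonneg A]
        linarith
      rw [dist_eq_norm]
      nlinarith [norm_nonneg ((Cn p) z - (Cn q) z), hε]
    refine ⟨N, fun m hm n hn => ?_⟩
    rcases le_total m n with h | h
    · exact key m n hm hn h
    · rw [dist_comm]; exact key n m hn hm h
  have hex : ∀ z, ∃ l, Filter.Tendsto (fun n => (Cn n) z) Filter.atTop (nhds l) :=
    fun z => cauchySeq_tendsto_of_complete (hCauchy z)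
  choose F hF using hex
  have hFadd : ∀ u v, F (u + v) = F u + F v := by
    intro u v
    have t1 : Filter.Tendsto (fun n => (Cn n) (u + v)) Filter.atTop (nhds (F u + F v)) := by
      have he : (fun n => (Cn n) (u + v)) = fun n => (Cn n) u + (Cn n) v := by
        funext n; rw [map_add]
      rw [he]; exact (hF u).add (hF v)
    exact tendsto_nhds_unique (hF (u + v)) t1
  have hFsmul : ∀ (c : ℂ) (u : H), F (c • u) = c • F u := by
    intro c u
    have t1 : Filter.Tendsto (fun n => (Cn n) (c • u)) Filter.atTop (nhds (c • F u)) := by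
      have he : (fun n => (Cn n) (c • u)) = fun n => c • (Cn n) u := by
        funext n; rw [map_smul]
      rw [he]; exact (hF u).const_smul c
    exact tendsto_nhds_unique (hF (c • u)) t1
  have hFbound : ∀ z, ‖F z‖ ≤ ‖A‖ * ‖z‖ := fun z =>
    le_of_tendsto (hF z).norm (Filter.Eventually.of_forall (fun n => hnb n z))
  set Flin : H →ₗ[ℂ] H :=
    { toFun := F, map_add' := hFadd, map_smul' := hFsmul } with hFlin
  set Cop : H →L[ℂ] H := LinearMap.mkContinuous Flin ‖A‖ hFbound with hCop
  have hCopApp : ∀ z, Cop z = F z := fun z => rfl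
  have hinner : ∀ z, ⟪Cop z, z⟫ = ((L z : ℝ) : ℂ) := by
    intro z
    have t1 : Filter.Tendsto (fun n => ⟪(Cn n) z, z⟫) Filter.atTop (nhds ⟪Cop z, z⟫) := by
      rw [hCopApp]
      exact Filter.Tendsto.inner (hF z) tendsto_const_nhds
    have t2 : (fun n => ⟪(Cn n) z, z⟫) = fun n => ((QF (Cn n) z : ℝ) : ℂ) := by
      funext n; exact (hsym n).inner_real z
    have t3 : Filter.Tendsto (fun n => ((QF (Cn n) z : ℝ) : ℂ)) Filter.atTop
        (nhds ((L z : ℝ) : ℂ)) :=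
      (Complex.continuous_ofReal.tendsto _).comp (htendL z)
    rw [t2] at t1
    exact tendsto_nhds_unique t1 t3
  have hQFC : ∀ z, QF Cop z = L z := by
    intro z; unfold QF; rw [hinner z]; simp
  have hpos : IsPosOp Cop := fun z => by
    rw [hinner z]; exact Complex.zero_le_real.mpr (hLnn z)
  have hreal : ∀ z, ⟪Cop z, z⟫ = ((QF Cop z : ℝ) : ℂ) := by
    intro z; rw [hinner z, hQFC z]
  have hCopA : OpLe Cop A :=
    opLe_of_qf hreal (inner_real_of_pos hA)
      (fun z => by rw [hQFC z]; exact le_trans (hLle 0 z) (hleA 0 z))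
  have hCopD : OpLe Cop (B - A) := by
    apply opLe_of_qf hreal (inner_real_of_pos hD)
    intro z
    rw [hQFC z]
    have ht : Filter.Tendsto (fun n : ℕ => QF (B - A) z + 1 / ((n:ℝ) + 1) * ‖z‖ ^ 2)
        Filter.atTop (nhds (QF (B - A) z)) := by
      have := Filter.Tendsto.add (tendsto_const_nhds (x := QF (B - A) z))
        (tendsto_one_div_add_atTop_nhds_zero_nat.mul_const (‖z‖ ^ 2))
      simpa using this
    exact ge_of_tendsto ht (Filter.Eventually.of_forall fun n =>
      le_trans (hLle n z) (hleD n z))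
  have hC0 : Cop = 0 := hsing Cop hpos hCopA hCopD
  have hL0 : L x = 0 := by
    have h := hQFC x
    rw [hC0, qf_zero_op] at h
    exact h.symm
  have hinf : (⨅ n : ℕ, QF (Cn n) x) < δ := by
    have : L x < δ := by rw [hL0]; exact hδ
    exact this
  obtain ⟨n, hn⟩ := exists_lt_of_ciInf_lt hinf
  obtain ⟨y, hy⟩ := h2 n x
  refine ⟨y, ?_⟩
  rw [hy] at hn
  have hyn : (0:ℝ) ≤ 1 / ((n:ℝ) + 1) * ‖y‖ ^ 2 := by positivity
  linarith

end Complete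

end QUAux


theorem quasi_unit_iff_singular
    {H : Type*} [NormedAddCommGroup H] [InnerProductSpace ℂ H] [CompleteSpace H]
    (A B S : H →L[ℂ] H) (hA : IsPosOp A) (hB : IsPosOp B) (hS : IsPosOp S)
    (hAB : OpLe A B) (hshort : IsShort A B S) :
    A = S ↔ SingOp A (B - A) := by
  constructor
  · -- quasi-unit implies singular
    intro hAS C hC hCA hCD
    have hsymC := QUAux.symm_of_pos hC
    have hCAq : ∀ z, QF C z ≤ QF A z := fun z => QUAux.OpLe.qf hCA z
    have hCDq : ∀ z, QF C z ≤ QF (B - A) z := fun z => QUAux.OpLe.qf hCD z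
    have hDq : ∀ z : H, QF (B - A) z = QF B z - QF A z := QUAux.qf_sub_op A B
    set T := A + C with hT
    have hTpos : IsPosOp T := fun z => by
      rw [hT, ContinuousLinearMap.add_apply, inner_add_left]
      exact add_nonneg (hA z) (hC z)
    have hTq : ∀ z, QF T z = QF A z + QF C z := fun z => by
      rw [hT]; unfold QF
      rw [ContinuousLinearMap.add_apply, inner_add_left]
      simp
    have hTB : ∀ z, QF T z ≤ QF B z := fun z => by
      have h1 := hCDq z
      rw [hDq z] at h1
      linarith [hTq z]
    have hTA : ∀ z, QF T z ≤ 2 * QF A z := fun z => by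
      linarith [hTq z, hCAq z]
    have hkey := fun x : H => QUAux.qf_le_short hA hB (fun x => hshort x) hTpos
      (by norm_num : (1:ℝ) ≤ 2) hTB hTA x
    have hCz : ∀ x, QF C x = 0 := by
      intro x
      have h1 := hkey x
      rw [hTq x] at h1
      have h2 : QF S x = QF A x := by rw [← hAS]
      have h3 := QUAux.qf_nonneg hC x
      linarith
    exact QUAux.eq_zero_of_qf hsymC hCz
  · -- singular implies quasi-unit
    intro hsing
    have hsymA := QUAux.symm_of_pos hA
    have hABq : ∀ z : H, QF A z ≤ QF B z := fun z => QUAux.OpLe.qf hAB z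
    have hAS : ∀ x, QF A x ≤ QF S x := fun x =>
      QUAux.qf_le_short hA hB (fun x => hshort x) hA (le_refl 1) hABq
        (fun z => by rw [one_mul]) x
    have hSA : ∀ x, QF S x ≤ QF A x := by
      intro x
      rw [hshort x]
      apply ciSup_le
      intro n
      have hbdd_below : BddBelow (Set.range fun y : H => QF B (x - y) + (n : ℝ) * QF A y) :=
        ⟨0, by
          rintro r ⟨y, rfl⟩
          exact add_nonneg (QUAux.qf_nonneg hB _)
            (mul_nonneg (Nat.cast_nonneg n) (QUAux.qf_nonneg hA _))⟩
      have hδbound : ∀ δ : ℝ, 0 < δ →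
          (⨅ y : H, (QF B (x - y) + (n:ℝ) * QF A y)) ≤
            QF A x + (2 * Real.sqrt (QF A x) * Real.sqrt δ + ((n:ℝ) + 2) * δ) := by
        intro δ hδ
        obtain ⟨y', hy'⟩ := QUAux.sing_inf_small hA hB hAB hsing x hδ
        have hA1 : 0 ≤ QF A (x - y') := QUAux.qf_nonneg hA _
        have hD1 : 0 ≤ QF (B - A) y' := QUAux.qf_nonneg hAB _
        have hAy : QF A (x - y') < δ := by linarith
        have hDy : QF (B - A) y' < δ := by linarith
        have hxy : x - (x - y') = y' := by abel
        have h1 : (⨅ y : H, (QF B (x - y) + (n:ℝ) * QF A y)) ≤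
            QF B y' + (n:ℝ) * QF A (x - y') := by
          have := ciInf_le hbdd_below (x - y')
          rwa [hxy] at this
        have hBsplit : QF B y' = QF A y' + QF (B - A) y' := by
          rw [QUAux.qf_sub_op]; ring
        -- bound QF A y'
        have hAy' : QF A y' ≤ QF A x + 2 * Real.sqrt (QF A x) * Real.sqrt δ + δ := by
          have hexp := QUAux.qf_sub hsymA x (x - y')
          rw [hxy] at hexp
          have hcs := QUAux.cs_sqrt hsymA (QUAux.qf_nonneg hA) x (x - y')
          have hble : -QUAux.bf A x (x - y') ≤
              Real.sqrt (QF A x) * Real.sqrt (QF A (x - y')) := by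
            have := neg_abs_le (QUAux.bf A x (x - y'))
            linarith
          have hsle : Real.sqrt (QF A (x - y')) ≤ Real.sqrt δ :=
            Real.sqrt_le_sqrt hAy.le
          have hsx : 0 ≤ Real.sqrt (QF A x) := Real.sqrt_nonneg _
          have hmul : Real.sqrt (QF A x) * Real.sqrt (QF A (x - y')) ≤
              Real.sqrt (QF A x) * Real.sqrt δ :=
            mul_le_mul_of_nonneg_left hsle hsx
          linarith
        have hn0 : (0:ℝ) ≤ (n:ℝ) := Nat.cast_nonneg n
        have hnA : (n:ℝ) * QF A (x - y') ≤ (n:ℝ) * δ :=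
          mul_le_mul_of_nonneg_left hAy.le hn0
        calc (⨅ y : H, (QF B (x - y) + (n:ℝ) * QF A y))
            ≤ QF B y' + (n:ℝ) * QF A (x - y') := h1
          _ = QF A y' + QF (B - A) y' + (n:ℝ) * QF A (x - y') := by rw [hBsplit]
          _ ≤ QF A x + (2 * Real.sqrt (QF A x) * Real.sqrt δ + ((n:ℝ) + 2) * δ) := by
              nlinarith
      have htend : Filter.Tendsto (fun k : ℕ => QF A x +
          (2 * Real.sqrt (QF A x) * Real.sqrt (1/((k:ℝ)+1)) + ((n:ℝ)+2) * (1/((k:ℝ)+1))))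
          Filter.atTop (nhds (QF A x)) := by
        have h1 : Filter.Tendsto (fun k : ℕ => (1:ℝ)/((k:ℝ)+1)) Filter.atTop (nhds 0) :=
          tendsto_one_div_add_atTop_nhds_zero_nat
        have h2 := h1.sqrt
        have h3 := (h2.const_mul (2 * Real.sqrt (QF A x))).add (h1.const_mul ((n:ℝ)+2))
        have h4 := h3.const_add (QF A x)
        simpa using h4
      exact ge_of_tendsto htend (Filter.Eventually.of_forall fun k =>
        hδbound (1/((k:ℝ)+1)) (by positivity))
    have hsymSA : QUAux.Symm (S - A) :=
      (QUAux.symm_of_pos hS).sub (QUAux.symm_of_pos hA)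
    have hz : S - A = 0 := QUAux.eq_zero_of_qf hsymSA (fun x => by
      rw [QUAux.qf_sub_op]
      linarith [hAS x, hSA x])
    have : S = A := by rwa [sub_eq_zero] at hz
    exact this.symm
end

section
/- Let A and B be positive bounded operators on a complex Hilbert space H, and let S be a positive operator such that S[x] = sup_{n∈ℕ} inf_{y∈H} (B[x−y] + n·A[y]) for all x ∈ H (i.e. S = [A]B). Then S is an extreme point of the operator interval [0,B], and A + S is an extreme point of the operator interval [0, A+B]. -/
open scoped ComplexOrder

open scoped InnerProductSpace

section Aux

variable {H : Type*} [NormedAddCommGroup H] [InnerProductSpace ℂ H]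

lemma QF_nonneg {A : H →L[ℂ] H} (hA : IsPosOp A) (x : H) : 0 ≤ QF A x :=
  (Complex.le_def.mp (hA x)).1

lemma QF_im {A : H →L[ℂ] H} (hA : IsPosOp A) (x : H) : (inner ℂ (A x) x : ℂ).im = 0 :=
  ((Complex.le_def.mp (hA x)).2).symm

lemma QF_zero_vec (A : H →L[ℂ] H) : QF A 0 = 0 := by
  simp [QF]

lemma QF_add (A B : H →L[ℂ] H) (x : H) : QF (A + B) x = QF A x + QF B x := by
  simp [QF, inner_add_left]

lemma QF_sub (A B : H →L[ℂ] H) (x : H) : QF (A - B) x = QF A x - QF B x := by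
  simp [QF, inner_sub_left]

lemma QF_neg (A : H →L[ℂ] H) (x : H) : QF (-A) x = - QF A x := by
  simp [QF, inner_neg_left]

lemma QF_smul_op (c : ℝ) (A : H →L[ℂ] H) (x : H) : QF (c • A) x = c * QF A x := by
  simp only [QF, ContinuousLinearMap.smul_apply, ← Complex.coe_smul, inner_smul_left,
    Complex.conj_ofReal]
  simp

lemma QF_parallelogram (E : H →L[ℂ] H) (u v : H) :
    QF E (u + v) + QF E (u - v) = 2 * QF E u + 2 * QF E v := by
  simp only [QF, map_add, map_sub, inner_add_left, inner_add_right, inner_sub_left,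
    inner_sub_right, Complex.add_re, Complex.sub_re]
  ring

lemma QF_smul_vec (E : H →L[ℂ] H) (c : ℝ) (u : H) : QF E (c • u) = c ^ 2 * QF E u := by
  have h : E (c • u) = (c : ℂ) • E u := by
    rw [← Complex.coe_smul, map_smul]
  have h2 : c • u = (c : ℂ) • u := (Complex.coe_smul c u).symm
  rw [QF, h, h2, inner_smul_left, inner_smul_right, Complex.conj_ofReal]
  simp [QF]
  ring

lemma OpLe_QF {A B : H →L[ℂ] H} (h : OpLe A B) (x : H) : QF A x ≤ QF B x := by
  have := QF_nonneg h x
  rw [QF_sub] at this; linarith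

lemma QF_polar_inner (E : H →L[ℂ] H) (u v : H) :
    QF E (u + v) - QF E u - QF E v = ((inner ℂ (E u) v : ℂ) + (inner ℂ (E v) u : ℂ)).re := by
  simp only [QF, map_add, inner_add_left, inner_add_right, Complex.add_re]
  ring

lemma QF_polar_scale (E : H →L[ℂ] H) (u v : H) {c : ℝ} (hc : c ≠ 0) :
    QF E (c • u + c⁻¹ • v) - QF E (c • u) - QF E (c⁻¹ • v)
      = QF E (u + v) - QF E u - QF E v := by
  rw [QF_polar_inner, QF_polar_inner]
  have h1 : E (c • u) = ((c : ℝ) : ℂ) • E u := by rw [← Complex.coe_smul, map_smul]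
  have h2 : E (c⁻¹ • v) = ((c⁻¹ : ℝ) : ℂ) • E v := by rw [← Complex.coe_smul, map_smul]
  have h3 : c • u = ((c : ℝ) : ℂ) • u := (Complex.coe_smul c u).symm
  have h4 : c⁻¹ • v = ((c⁻¹ : ℝ) : ℂ) • v := (Complex.coe_smul c⁻¹ v).symm
  rw [h1, h2, h3, h4, inner_smul_left, inner_smul_left, inner_smul_right, inner_smul_right,
    Complex.conj_ofReal, Complex.conj_ofReal]
  have hcc : ((c : ℝ) : ℂ) * ((c⁻¹ : ℝ) : ℂ) = 1 := by
    push_cast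
    field_simp
  rw [← mul_assoc, hcc, one_mul, ← mul_assoc, mul_comm (((c⁻¹ : ℝ)) : ℂ) ((c : ℝ) : ℂ), hcc,
    one_mul]

-- AM-GM style bound
lemma amgm_aux {X p q : ℝ} (hp : 0 ≤ p) (hq : 0 ≤ q)
    (h : ∀ t : ℝ, 0 < t → X ≤ t * p + t⁻¹ * q) :
    X ≤ 2 * Real.sqrt p * Real.sqrt q := by
  have hnn : 0 ≤ 2 * Real.sqrt p * Real.sqrt q := by positivity
  rcases eq_or_lt_of_le hp with hp0 | hp0
  · have hX : X ≤ 0 := by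
      by_contra hX
      push_neg at hX
      have ht : (0:ℝ) < q / X + 1 := by positivity
      have h1 := h (q / X + 1) ht
      rw [← hp0, mul_zero, zero_add] at h1
      have h2 : (q / X + 1)⁻¹ * q < X := by
        rw [inv_mul_eq_div, div_lt_iff₀ ht]
        have hx : X * (q / X + 1) = q + X := by field_simp
        linarith
      linarith
    linarith
  rcases eq_or_lt_of_le hq with hq0 | hq0
  · have hX : X ≤ 0 := by
      by_contra hX
      push_neg at hX
      have ht : (0:ℝ) < X / (2 * p) := by positivity
      have h1 := h (X / (2 * p)) ht
      rw [← hq0, mul_zero, add_zero] at h1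
      have hx : X / (2 * p) * p = X / 2 := by field_simp
      rw [hx] at h1
      linarith
    linarith
  · have hsp : 0 < Real.sqrt p := Real.sqrt_pos.mpr hp0
    have hsq : 0 < Real.sqrt q := Real.sqrt_pos.mpr hq0
    have ht : (0:ℝ) < Real.sqrt q / Real.sqrt p := by positivity
    have h1 := h _ ht
    have hp2 : Real.sqrt p ^ 2 = p := Real.sq_sqrt hp
    have hq2 : Real.sqrt q ^ 2 = q := Real.sq_sqrt hq
    have hx : Real.sqrt q / Real.sqrt p * p + (Real.sqrt q / Real.sqrt p)⁻¹ * q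
        = 2 * Real.sqrt p * Real.sqrt q := by
      field_simp
      nlinarith [hp2, hq2]
    linarith

lemma abs_polar_le {E P : H →L[ℂ] H} (hP : IsPosOp P) (hE : ∀ w, |QF E w| ≤ QF P w) (u v : H) :
    |QF E (u + v) - QF E u - QF E v| ≤ 2 * Real.sqrt (QF P u) * Real.sqrt (QF P v) := by
  apply amgm_aux (QF_nonneg hP u) (QF_nonneg hP v)
  intro t ht
  have hc0 : 0 < Real.sqrt t := Real.sqrt_pos.mpr ht
  have hc : Real.sqrt t ≠ 0 := ne_of_gt hc0
  have hscale := QF_polar_scale E u v hc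
  set c := Real.sqrt t with hcdef
  set a := c • u with ha
  set b := c⁻¹ • v with hb
  have hpar : QF E (a + b) + QF E (a - b) = 2 * QF E a + 2 * QF E b := QF_parallelogram E a b
  have hparP : QF P (a + b) + QF P (a - b) = 2 * QF P a + 2 * QF P b := QF_parallelogram P a b
  have h1 := abs_le.mp (hE (a + b))
  have h2 := abs_le.mp (hE (a - b))
  have hQa : QF P a = t * QF P u := by
    rw [ha, QF_smul_vec, hcdef, Real.sq_sqrt ht.le]
  have hQb : QF P b = t⁻¹ * QF P v := by
    rw [hb, QF_smul_vec, inv_pow, hcdef, Real.sq_sqrt ht.le]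
  rw [abs_le]
  constructor <;> linarith

lemma QF_add_le {P : H →L[ℂ] H} (hP : IsPosOp P) (u v : H) :
    QF P (u + v) ≤ (Real.sqrt (QF P u) + Real.sqrt (QF P v)) ^ 2 := by
  have h := abs_polar_le hP (fun w => by rw [abs_of_nonneg (QF_nonneg hP w)]) u v
  have h1 := abs_le.mp h
  have e1 := Real.sq_sqrt (QF_nonneg hP u)
  have e2 := Real.sq_sqrt (QF_nonneg hP v)
  nlinarith [Real.sqrt_nonneg (QF P u), Real.sqrt_nonneg (QF P v)]

lemma sqrt_QF_triangle {P : H →L[ℂ] H} (hP : IsPosOp P) (u v : H) :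
    Real.sqrt (QF P (u + v)) ≤ Real.sqrt (QF P u) + Real.sqrt (QF P v) := by
  have h := Real.sqrt_le_sqrt (QF_add_le hP u v)
  rwa [Real.sqrt_sq (by positivity)] at h

lemma sqrt_QF_triangle' {P : H →L[ℂ] H} (hP : IsPosOp P) (x y : H) :
    Real.sqrt (QF P x) ≤ Real.sqrt (QF P (x - y)) + Real.sqrt (QF P y) := by
  have h := sqrt_QF_triangle hP (x - y) y
  rwa [sub_add_cancel] at h

lemma seminorm_lower {P : H →L[ℂ] H} (hP : IsPosOp P) (x y : H) :
    QF P x - 2 * Real.sqrt (QF P x) * Real.sqrt (QF P y) ≤ QF P (x - y) := by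
  have h := sqrt_QF_triangle' hP x y
  have e1 := Real.sq_sqrt (QF_nonneg hP x)
  have e2 := Real.sq_sqrt (QF_nonneg hP y)
  have e3 := Real.sq_sqrt (QF_nonneg hP (x - y))
  nlinarith [Real.sqrt_nonneg (QF P x), Real.sqrt_nonneg (QF P y),
    Real.sqrt_nonneg (QF P (x - y)),
    sq_nonneg (Real.sqrt (QF P y) - (Real.sqrt (QF P (x - y)) + Real.sqrt (QF P y) - Real.sqrt (QF P x)))]

lemma rr_cs {p1 q1 p2 q2 : ℝ} (hp1 : 0 ≤ p1) (hq1 : 0 ≤ q1) (hp2 : 0 ≤ p2) (hq2 : 0 ≤ q2) :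
    (Real.sqrt p1 + Real.sqrt p2) ^ 2 + (Real.sqrt q1 + Real.sqrt q2) ^ 2
      ≤ (Real.sqrt (p1 + q1) + Real.sqrt (p2 + q2)) ^ 2 := by
  have e1 := Real.sq_sqrt hp1
  have e2 := Real.sq_sqrt hp2
  have e3 := Real.sq_sqrt hq1
  have e4 := Real.sq_sqrt hq2
  have e5 := Real.sq_sqrt (add_nonneg hp1 hq1)
  have e6 := Real.sq_sqrt (add_nonneg hp2 hq2)
  have key : Real.sqrt p1 * Real.sqrt p2 + Real.sqrt q1 * Real.sqrt q2
      ≤ Real.sqrt (p1 + q1) * Real.sqrt (p2 + q2) := by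
    have hL : 0 ≤ Real.sqrt p1 * Real.sqrt p2 + Real.sqrt q1 * Real.sqrt q2 := by positivity
    have hR : 0 ≤ Real.sqrt (p1 + q1) * Real.sqrt (p2 + q2) := by positivity
    have hsq : (Real.sqrt p1 * Real.sqrt p2 + Real.sqrt q1 * Real.sqrt q2) ^ 2
        ≤ (Real.sqrt (p1 + q1) * Real.sqrt (p2 + q2)) ^ 2 := by
      nlinarith [sq_nonneg (Real.sqrt p1 * Real.sqrt q2 - Real.sqrt p2 * Real.sqrt q1)]
    have := Real.sqrt_le_sqrt hsq
    rwa [Real.sqrt_sq hL, Real.sqrt_sq hR] at this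
  nlinarith

noncomputable def Fn (A B : H →L[ℂ] H) (n : ℕ) (x : H) : ℝ :=
  ⨅ y : H, (QF B (x - y) + (n : ℝ) * QF A y)

lemma Fn_def (A B : H →L[ℂ] H) (n : ℕ) (x : H) :
    Fn A B n x = ⨅ y : H, (QF B (x - y) + (n : ℝ) * QF A y) := rfl

variable {A B : H →L[ℂ] H}

lemma Fn_bddBelow (hA : IsPosOp A) (hB : IsPosOp B) (n : ℕ) (x : H) :
    BddBelow (Set.range fun y : H => QF B (x - y) + (n : ℝ) * QF A y) := by
  refine ⟨0, ?_⟩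
  rintro _ ⟨y, rfl⟩
  exact add_nonneg (QF_nonneg hB _) (mul_nonneg (by positivity) (QF_nonneg hA _))

lemma Fn_nonneg (hA : IsPosOp A) (hB : IsPosOp B) (n : ℕ) (x : H) : 0 ≤ Fn A B n x := by
  rw [Fn_def]
  exact le_ciInf fun y =>
    add_nonneg (QF_nonneg hB _) (mul_nonneg (by positivity) (QF_nonneg hA _))

lemma Fn_le (hA : IsPosOp A) (hB : IsPosOp B) (n : ℕ) (x y : H) :
    Fn A B n x ≤ QF B (x - y) + (n : ℝ) * QF A y := by
  rw [Fn_def]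
  exact ciInf_le (Fn_bddBelow hA hB n x) y

lemma Fn_le_B (hA : IsPosOp A) (hB : IsPosOp B) (n : ℕ) (x : H) : Fn A B n x ≤ QF B x := by
  have h := Fn_le hA hB n x 0
  simpa [QF_zero_vec] using h

lemma Fn_le_A (hA : IsPosOp A) (hB : IsPosOp B) (n : ℕ) (x : H) :
    Fn A B n x ≤ (n : ℝ) * QF A x := by
  have h := Fn_le hA hB n x x
  simpa [QF_zero_vec] using h

lemma Fn_mono (hA : IsPosOp A) (hB : IsPosOp B) {m n : ℕ} (h : m ≤ n) (x : H) :
    Fn A B m x ≤ Fn A B n x := by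
  rw [Fn_def, Fn_def]
  refine ciInf_mono (Fn_bddBelow hA hB m x) fun y => ?_
  have : (m : ℝ) * QF A y ≤ (n : ℝ) * QF A y :=
    mul_le_mul_of_nonneg_right (by exact_mod_cast h) (QF_nonneg hA y)
  linarith

lemma Fn_triangle (hA : IsPosOp A) (hB : IsPosOp B) (n : ℕ) (u v : H) :
    Real.sqrt (Fn A B n (u + v)) ≤ Real.sqrt (Fn A B n u) + Real.sqrt (Fn A B n v) := by
  have main : ∀ ε : ℝ, 0 < ε →
      Real.sqrt (Fn A B n (u + v)) ≤ Real.sqrt (Fn A B n u + ε) + Real.sqrt (Fn A B n v + ε) := by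
    intro ε hε
    obtain ⟨z, hz⟩ := exists_lt_of_ciInf_lt
      (show (⨅ y : H, (QF B (u - y) + (n : ℝ) * QF A y)) < Fn A B n u + ε by
        rw [← Fn_def]; linarith)
    obtain ⟨w, hw⟩ := exists_lt_of_ciInf_lt
      (show (⨅ y : H, (QF B (v - y) + (n : ℝ) * QF A y)) < Fn A B n v + ε by
        rw [← Fn_def]; linarith)
    set p1 := QF B (u - z) with hp1def
    set q1 := (n : ℝ) * QF A z with hq1def
    set p2 := QF B (v - w) with hp2def
    set q2 := (n : ℝ) * QF A w with hq2def
    have hp1 : 0 ≤ p1 := QF_nonneg hB _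
    have hp2 : 0 ≤ p2 := QF_nonneg hB _
    have hq1 : 0 ≤ q1 := mul_nonneg (by positivity) (QF_nonneg hA _)
    have hq2 : 0 ≤ q2 := mul_nonneg (by positivity) (QF_nonneg hA _)
    have step1 : Fn A B n (u + v) ≤ QF B ((u + v) - (z + w)) + (n : ℝ) * QF A (z + w) :=
      Fn_le hA hB n (u + v) (z + w)
    have heq : (u + v) - (z + w) = (u - z) + (v - w) := by abel
    rw [heq] at step1
    have step2 : QF B ((u - z) + (v - w)) ≤ (Real.sqrt p1 + Real.sqrt p2) ^ 2 :=
      QF_add_le hB _ _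
    have step3 : (n : ℝ) * QF A (z + w) ≤ (Real.sqrt q1 + Real.sqrt q2) ^ 2 := by
      have h1 : QF A (z + w) ≤ (Real.sqrt (QF A z) + Real.sqrt (QF A w)) ^ 2 := QF_add_le hA z w
      have e1 : Real.sqrt q1 = Real.sqrt (n : ℝ) * Real.sqrt (QF A z) :=
        Real.sqrt_mul (by positivity) _
      have e2 : Real.sqrt q2 = Real.sqrt (n : ℝ) * Real.sqrt (QF A w) :=
        Real.sqrt_mul (by positivity) _
      have e3 : Real.sqrt (n : ℝ) ^ 2 = (n : ℝ) := Real.sq_sqrt (by positivity)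
      calc (n : ℝ) * QF A (z + w)
          ≤ (n : ℝ) * (Real.sqrt (QF A z) + Real.sqrt (QF A w)) ^ 2 :=
            mul_le_mul_of_nonneg_left h1 (by positivity)
        _ = (Real.sqrt q1 + Real.sqrt q2) ^ 2 := by
            have e4 : (Real.sqrt (n:ℝ) * Real.sqrt (QF A z) + Real.sqrt (n:ℝ) * Real.sqrt (QF A w)) ^ 2
                = Real.sqrt (n:ℝ) ^ 2 * (Real.sqrt (QF A z) + Real.sqrt (QF A w)) ^ 2 := by ring
            rw [e1, e2, e4, e3]
    have step4 := rr_cs hp1 hq1 hp2 hq2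
    have step5 : Real.sqrt (p1 + q1) ≤ Real.sqrt (Fn A B n u + ε) :=
      Real.sqrt_le_sqrt (le_of_lt hz)
    have step6 : Real.sqrt (p2 + q2) ≤ Real.sqrt (Fn A B n v + ε) :=
      Real.sqrt_le_sqrt (le_of_lt hw)
    have total : Fn A B n (u + v)
        ≤ (Real.sqrt (Fn A B n u + ε) + Real.sqrt (Fn A B n v + ε)) ^ 2 := by
      have m1 : (Real.sqrt (p1 + q1) + Real.sqrt (p2 + q2)) ^ 2
          ≤ (Real.sqrt (Fn A B n u + ε) + Real.sqrt (Fn A B n v + ε)) ^ 2 := by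
        nlinarith [Real.sqrt_nonneg (p1 + q1), Real.sqrt_nonneg (p2 + q2),
          Real.sqrt_nonneg (Fn A B n u + ε), Real.sqrt_nonneg (Fn A B n v + ε)]
      linarith
    have hfin := Real.sqrt_le_sqrt total
    rwa [Real.sqrt_sq (by positivity)] at hfin
  have htend : Filter.Tendsto
      (fun ε : ℝ => Real.sqrt (Fn A B n u + ε) + Real.sqrt (Fn A B n v + ε))
      (nhdsWithin 0 (Set.Ioi 0))
      (nhds (Real.sqrt (Fn A B n u) + Real.sqrt (Fn A B n v))) := by
    have hcont : Continuous
        (fun ε : ℝ => Real.sqrt (Fn A B n u + ε) + Real.sqrt (Fn A B n v + ε)) := by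
      continuity
    have h0 := hcont.tendsto 0
    simp only [add_zero] at h0
    exact h0.mono_left nhdsWithin_le_nhds
  exact ge_of_tendsto htend
    (Filter.eventually_iff_exists_mem.mpr ⟨Set.Ioi 0, self_mem_nhdsWithin, fun ε hε => main ε hε⟩)

lemma Fn_triangle' (hA : IsPosOp A) (hB : IsPosOp B) (n : ℕ) (x y : H) :
    Real.sqrt (Fn A B n x) ≤ Real.sqrt (Fn A B n (x - y)) + Real.sqrt (Fn A B n y) := by
  have h := Fn_triangle hA hB n (x - y) y
  rwa [sub_add_cancel] at h

lemma isPosOp_of_QF {P : H →L[ℂ] H} (hre : ∀ z : H, 0 ≤ QF P z)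
    (him : ∀ z : H, (inner ℂ (P z) z : ℂ).im = 0) : IsPosOp P :=
  fun z => Complex.le_def.mpr ⟨by simpa [QF] using hre z, by simpa using (him z).symm⟩

lemma QF_neg_vec (P : H →L[ℂ] H) (z : H) : QF P (-z) = QF P z := by
  have h := QF_smul_vec P (-1) z
  simpa using h

lemma im_sub {P Q : H →L[ℂ] H} (hP : IsPosOp P) (hQ : IsPosOp Q) (z : H) :
    (inner ℂ ((P - Q) z) z : ℂ).im = 0 := by
  have h1 := QF_im hP z
  have h2 := QF_im hQ z
  simp [ContinuousLinearMap.sub_apply, inner_sub_left, h1, h2]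

lemma im_smul {P : H →L[ℂ] H} (c : ℝ) (him : ∀ z : H, (inner ℂ (P z) z : ℂ).im = 0) (z : H) :
    (inner ℂ ((c • P) z) z : ℂ).im = 0 := by
  have h : (c • P) z = ((c : ℝ) : ℂ) • P z := by
    rw [ContinuousLinearMap.smul_apply, ← Complex.coe_smul]
  rw [h, inner_smul_left, Complex.conj_ofReal]
  simp [Complex.mul_im, him z]

lemma eventually_div_le {c : ℝ} (hc : 0 ≤ c) {ε : ℝ} (hε : 0 < ε) :
    ∃ K0 : ℕ, ∀ k : ℕ, K0 ≤ k → c / ((k : ℝ) + 1) ≤ ε := by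
  refine ⟨⌈c / ε⌉₊, fun k hk => ?_⟩
  have h0 : (⌈c / ε⌉₊ : ℝ) ≤ (k : ℝ) := by exact_mod_cast hk
  have h1 : c / ε ≤ (k : ℝ) + 1 := le_trans (Nat.le_ceil _) (by linarith)
  rw [div_le_iff₀ (by positivity)]
  calc c = c / ε * ε := by field_simp
    _ ≤ ((k : ℝ) + 1) * ε := mul_le_mul_of_nonneg_right h1 hε.le
    _ = ε * ((k : ℝ) + 1) := mul_comm _ _

set_option maxHeartbeats 1000000 in
lemma key_lemma {A B S : H →L[ℂ] H} (hA : IsPosOp A) (hB : IsPosOp B) (hS : IsPosOp S)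
    (hshort : ∀ x : H, QF S x = ⨆ n : ℕ, Fn A B n x)
    {E M : H →L[ℂ] H} {K : ℝ} (hK : 0 < K) (hM : IsPosOp M)
    (hMsmall : ∀ w : H, QF M w ≤ QF A w + QF S w)
    (hE1 : ∀ w : H, |QF E w| ≤ K * QF M w)
    (hE2 : ∀ w : H, |QF E w| ≤ K * (QF B w - QF S w))
    (x : H) : QF E x = 0 := by
  -- basic facts
  have hbddF : ∀ z : H, BddAbove (Set.range fun n : ℕ => Fn A B n z) := fun z =>
    ⟨QF B z, by rintro _ ⟨n, rfl⟩; exact Fn_le_B hA hB n z⟩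
  have hFleS : ∀ (n : ℕ) (z : H), Fn A B n z ≤ QF S z := fun n z => by
    rw [hshort z]; exact le_ciSup (hbddF z) n
  have hSleB : ∀ z : H, QF S z ≤ QF B z := fun z => by
    rw [hshort z]
    exact ciSup_le fun n => Fn_le_B hA hB n z
  have hTre : ∀ z : H, 0 ≤ QF (B - S) z := fun z => by
    rw [QF_sub]; linarith [hSleB z]
  have hTpos : IsPosOp (B - S) := isPosOp_of_QF hTre (im_sub hB hS)
  have hKT : IsPosOp (K • (B - S)) :=
    isPosOp_of_QF (fun z => by rw [QF_smul_op]; exact mul_nonneg hK.le (hTre z))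
      (im_smul K (im_sub hB hS))
  have hE2' : ∀ w : H, |QF E w| ≤ QF (K • (B - S)) w := fun w => by
    rw [QF_smul_op, QF_sub]; exact hE2 w
  -- construction of the minimizing sequence
  have hex : ∀ k : ℕ, ∃ n : ℕ, QF S x - 1 / ((k : ℝ) + 1) < Fn A B n x := by
    intro k
    have h1 : QF S x - 1 / ((k : ℝ) + 1) < ⨆ n : ℕ, Fn A B n x := by
      rw [← hshort x]
      have : 0 < 1 / ((k : ℝ) + 1) := by positivity
      linarith
    exact exists_lt_of_lt_ciSup h1
  choose n0 hn0 using hex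
  set N : ℕ → ℕ := fun k => max (n0 k) (k + 1) with hNdef
  have hNge : ∀ k : ℕ, (k : ℝ) + 1 ≤ (N k : ℝ) := fun k => by
    have h : k + 1 ≤ N k := le_max_right _ _
    exact_mod_cast h
  have hNlb : ∀ k : ℕ, QF S x - 1 / ((k : ℝ) + 1) < Fn A B (N k) x := fun k =>
    lt_of_lt_of_le (hn0 k) (Fn_mono hA hB (le_max_left _ _) x)
  have hey : ∀ k : ℕ, ∃ y : H,
      QF B (x - y) + (N k : ℝ) * QF A y < Fn A B (N k) x + 1 / ((k : ℝ) + 1) := by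
    intro k
    apply exists_lt_of_ciInf_lt
    rw [← Fn_def]
    have : 0 < 1 / ((k : ℝ) + 1) := by positivity
    linarith
  choose y hy using hey
  have key : ∀ k : ℕ,
      QF B (x - y k) + (N k : ℝ) * QF A (y k) < QF S x + 1 / ((k : ℝ) + 1) := fun k =>
    lt_of_lt_of_le (hy k) (by linarith [hFleS (N k) x])
  have hBxy : ∀ k : ℕ, QF B (x - y k) ≤ QF S x + 1 / ((k : ℝ) + 1) := fun k => by
    have h1 := key k
    have h2 : 0 ≤ (N k : ℝ) * QF A (y k) := mul_nonneg (by positivity) (QF_nonneg hA _)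
    linarith
  have hBxy1 : ∀ k : ℕ, QF B (x - y k) ≤ QF S x + 1 := fun k => by
    have h1 := hBxy k
    have h2 : 1 / ((k : ℝ) + 1) ≤ 1 := by
      rw [div_le_one (by positivity)]
      have : (0:ℝ) ≤ (k : ℝ) := by positivity
      linarith
    linarith
  have hAy : ∀ k : ℕ, QF A (y k) ≤ (QF S x + 1) / ((k : ℝ) + 1) := fun k => by
    rw [le_div_iff₀ (by positivity)]
    have h1 := key k
    have h2 : 0 ≤ QF B (x - y k) := QF_nonneg hB _
    have h3 : ((k : ℝ) + 1) * QF A (y k) ≤ (N k : ℝ) * QF A (y k) :=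
      mul_le_mul_of_nonneg_right (hNge k) (QF_nonneg hA _)
    have h4 : 1 / ((k : ℝ) + 1) ≤ 1 := by
      rw [div_le_one (by positivity)]
      have : (0:ℝ) ≤ (k : ℝ) := by positivity
      linarith
    linarith
  -- B-Cauchy property
  have hCauchy : ∀ ε : ℝ, 0 < ε → ∃ K0 : ℕ, ∀ k : ℕ, K0 ≤ k → ∀ j : ℕ, K0 ≤ j →
      QF B (y k - y j) ≤ ε := by
    intro ε hε
    obtain ⟨m0, hm0⟩ := exists_lt_of_lt_ciSup
      (show QF S x - ε / 8 < ⨆ n : ℕ, Fn A B n x by rw [← hshort x]; linarith)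
    obtain ⟨K1, hK1⟩ := eventually_div_le (c := 1) zero_le_one
      (show (0:ℝ) < ε / 8 by positivity)
    refine ⟨max m0 K1, fun k hk j hj => ?_⟩
    have hkm0 : m0 ≤ k := le_trans (le_max_left _ _) hk
    have hjm0 : m0 ≤ j := le_trans (le_max_left _ _) hj
    have hkK1 : K1 ≤ k := le_trans (le_max_right _ _) hk
    have hjK1 : K1 ≤ j := le_trans (le_max_right _ _) hj
    set m : ℕ := min (N k) (N j) with hmdef
    have hm0m : m0 ≤ m := by
      have h2 : k + 1 ≤ N k := le_max_right _ _
      have h4 : j + 1 ≤ N j := le_max_right _ _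
      omega
    have hFm : QF S x - ε / 8 < Fn A B m x :=
      lt_of_lt_of_le hm0 (Fn_mono hA hB hm0m x)
    set w : H := (1/2 : ℝ) • (y k + y j) with hwdef
    have hstep : Fn A B m x ≤ QF B (x - w) + (m : ℝ) * QF A w := Fn_le hA hB m x w
    have hxw : x - w = (1/2 : ℝ) • ((x - y k) + (x - y j)) := by
      rw [hwdef]; module
    have hBxw : QF B (x - w) = (1/4) * QF B ((x - y k) + (x - y j)) := by
      rw [hxw, QF_smul_vec]; norm_num
    have hBpar : QF B ((x - y k) + (x - y j))
        = 2 * QF B (x - y k) + 2 * QF B (x - y j) - QF B (y j - y k) := by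
      have h := QF_parallelogram B (x - y k) (x - y j)
      have he : (x - y k) - (x - y j) = y j - y k := by abel
      rw [he] at h
      linarith
    have hAw : QF A w = (1/4) * QF A (y k + y j) := by
      rw [hwdef, QF_smul_vec]; norm_num
    have hApar : QF A (y k + y j) ≤ 2 * QF A (y k) + 2 * QF A (y j) := by
      have h := QF_parallelogram A (y k) (y j)
      have := QF_nonneg hA (y k - y j)
      linarith
    have hmk : (m : ℝ) ≤ (N k : ℝ) := by exact_mod_cast min_le_left _ _
    have hmj : (m : ℝ) ≤ (N j : ℝ) := by exact_mod_cast min_le_right _ _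
    have hmA : (m : ℝ) * QF A (y k + y j)
        ≤ 2 * ((N k : ℝ) * QF A (y k)) + 2 * ((N j : ℝ) * QF A (y j)) := by
      have h2 : (m : ℝ) * QF A (y k + y j) ≤ (m : ℝ) * (2 * QF A (y k) + 2 * QF A (y j)) :=
        mul_le_mul_of_nonneg_left hApar (by positivity)
      have h3 : (m : ℝ) * QF A (y k) ≤ (N k : ℝ) * QF A (y k) :=
        mul_le_mul_of_nonneg_right hmk (QF_nonneg hA _)
      have h4 : (m : ℝ) * QF A (y j) ≤ (N j : ℝ) * QF A (y j) :=
        mul_le_mul_of_nonneg_right hmj (QF_nonneg hA _)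
      nlinarith
    have hkey_k := key k
    have hkey_j := key j
    have hek : 1 / ((k : ℝ) + 1) ≤ ε / 8 := hK1 k hkK1
    have hej : 1 / ((j : ℝ) + 1) ≤ ε / 8 := hK1 j hjK1
    have hgoal : y k - y j = -(y j - y k) := by abel
    rw [hgoal, QF_neg_vec]
    rw [hBxw, hAw] at hstep
    linarith
  -- S[y k] → 0
  have hSy : ∀ ε : ℝ, 0 < ε → ∃ K0 : ℕ, ∀ k : ℕ, K0 ≤ k → QF S (y k) ≤ ε := by
    intro ε hε
    obtain ⟨K1, hK1⟩ := hCauchy (ε / 4) (by positivity)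
    refine ⟨K1, fun k hk => ?_⟩
    rw [hshort (y k)]
    apply ciSup_le
    intro n
    obtain ⟨K2, hK2⟩ := eventually_div_le (c := (n : ℝ) * (QF S x + 1))
      (mul_nonneg (by positivity) (by linarith [QF_nonneg hS x]))
      (show (0:ℝ) < ε / 4 by positivity)
    set j := max K1 K2 with hjdef
    have hj1 : K1 ≤ j := le_max_left _ _
    have hj2 : K2 ≤ j := le_max_right _ _
    have hb1 : Real.sqrt (Fn A B n (y k))
        ≤ Real.sqrt (Fn A B n (y k - y j)) + Real.sqrt (Fn A B n (y j)) :=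
      Fn_triangle' hA hB n (y k) (y j)
    have hb2 : Fn A B n (y k - y j) ≤ ε / 4 :=
      le_trans (Fn_le_B hA hB n _) (hK1 k hk j hj1)
    have hb3 : Fn A B n (y j) ≤ ε / 4 := by
      have h1 := Fn_le_A hA hB n (y j)
      have h2 : (n : ℝ) * QF A (y j) ≤ (n : ℝ) * ((QF S x + 1) / ((j : ℝ) + 1)) :=
        mul_le_mul_of_nonneg_left (hAy j) (by positivity)
      have h3 : (n : ℝ) * ((QF S x + 1) / ((j : ℝ) + 1))
          = (n : ℝ) * (QF S x + 1) / ((j : ℝ) + 1) := by ring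
      have h4 := hK2 j hj2
      linarith
    have hm1 : Real.sqrt (Fn A B n (y k - y j)) ≤ Real.sqrt (ε / 4) := Real.sqrt_le_sqrt hb2
    have hm2 : Real.sqrt (Fn A B n (y j)) ≤ Real.sqrt (ε / 4) := Real.sqrt_le_sqrt hb3
    have h5 : Real.sqrt (Fn A B n (y k)) ≤ 2 * Real.sqrt (ε / 4) := by linarith
    have e1 := Real.sq_sqrt (Fn_nonneg hA hB n (y k))
    have e2 := Real.sq_sqrt (show (0:ℝ) ≤ ε / 4 by positivity)
    nlinarith [Real.sqrt_nonneg (Fn A B n (y k)), Real.sqrt_nonneg (ε / 4)]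
  -- (B-S)[x - y k] → 0
  have hTxy : ∀ ε : ℝ, 0 < ε → ∃ K0 : ℕ, ∀ k : ℕ, K0 ≤ k →
      QF B (x - y k) - QF S (x - y k) ≤ ε := by
    intro ε hε
    set s := Real.sqrt (QF S x) with hsdef
    have hs0 : 0 ≤ s := Real.sqrt_nonneg _
    set δ := (ε / (2 * (2 * s + 1))) ^ 2 with hδdef
    obtain ⟨K1, hK1⟩ := hSy δ (by positivity)
    obtain ⟨K2, hK2⟩ := eventually_div_le (c := 1) zero_le_one
      (show (0:ℝ) < ε / 2 by positivity)
    refine ⟨max K1 K2, fun k hk => ?_⟩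
    have hk1 : K1 ≤ k := le_trans (le_max_left _ _) hk
    have hk2 : K2 ≤ k := le_trans (le_max_right _ _) hk
    have hlow := seminorm_lower hS x (y k)
    have h1 := hBxy k
    have hsyk : QF S (y k) ≤ δ := hK1 k hk1
    have hr0 : 0 ≤ Real.sqrt (QF S (y k)) := Real.sqrt_nonneg _
    have hsq : Real.sqrt (QF S (y k)) ≤ ε / (2 * (2 * s + 1)) := by
      have h2 := Real.sqrt_le_sqrt hsyk
      rwa [hδdef, Real.sqrt_sq (by positivity)] at h2
    have hd : (0:ℝ) < 2 * (2 * s + 1) := by positivity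
    have hr : Real.sqrt (QF S (y k)) * (2 * (2 * s + 1)) ≤ ε := by
      rw [← le_div_iff₀ hd]; exact hsq
    have h2 : 2 * s * Real.sqrt (QF S (y k)) ≤ ε / 2 := by
      nlinarith [mul_nonneg hs0 hr0]
    have h3 : 1 / ((k : ℝ) + 1) ≤ ε / 2 := hK2 k hk2
    linarith
  -- (B-S)[y k] is bounded
  set Cb := (Real.sqrt (QF B x) + Real.sqrt (QF S x + 1)) ^ 2 with hCbdef
  have hCb0 : 0 ≤ Cb := by positivity
  have hTyb : ∀ k : ℕ, QF B (y k) - QF S (y k) ≤ Cb := by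
    intro k
    have h1 : Real.sqrt (QF B (y k))
        ≤ Real.sqrt (QF B (y k - x)) + Real.sqrt (QF B x) := sqrt_QF_triangle' hB (y k) x
    have h2 : QF B (y k - x) = QF B (x - y k) := by
      rw [show y k - x = -(x - y k) by abel, QF_neg_vec]
    have h3 : Real.sqrt (QF B (x - y k)) ≤ Real.sqrt (QF S x + 1) :=
      Real.sqrt_le_sqrt (hBxy1 k)
    rw [h2] at h1
    have e1 := Real.sq_sqrt (QF_nonneg hB (y k))
    have hSyk := QF_nonneg hS (y k)
    have hsum : Real.sqrt (QF B (y k)) ≤ Real.sqrt (QF B x) + Real.sqrt (QF S x + 1) := by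
      linarith
    nlinarith [Real.sqrt_nonneg (QF B (y k)), Real.sqrt_nonneg (QF B x),
      Real.sqrt_nonneg (QF S x + 1)]
  -- final assembly
  have habs : ∀ ε : ℝ, 0 < ε → |QF E x| ≤ ε := by
    intro ε hε
    have hK0 : K ≠ 0 := ne_of_gt hK
    set c2 := ε / (6 * (Real.sqrt (K * Cb) + 1)) with hc2def
    have hc20 : 0 < c2 := by positivity
    set δ1 := min (ε / (3 * K)) (c2 ^ 2 / K) with hδ1def
    have hδ1 : 0 < δ1 := by positivity
    obtain ⟨K1, hK1⟩ := hTxy δ1 hδ1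
    obtain ⟨K2, hK2⟩ := hSy (ε / (6 * K)) (by positivity)
    obtain ⟨K3', hK3'⟩ := eventually_div_le (c := QF S x + 1)
      (by linarith [QF_nonneg hS x]) (show (0:ℝ) < ε / (6 * K) by positivity)
    set k := max (max K1 K2) K3' with hkdef
    have hk1 : K1 ≤ k := le_trans (le_max_left _ _) (le_max_left _ _)
    have hk2 : K2 ≤ k := le_trans (le_max_right _ _) (le_max_left _ _)
    have hk3 : K3' ≤ k := le_max_right _ _
    -- the three pieces
    have hp1 : |QF E (x - y k)| ≤ ε / 3 := by
      have h1 := hE2 (x - y k)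
      have h2 : QF B (x - y k) - QF S (x - y k) ≤ δ1 := hK1 k hk1
      have h3 : δ1 ≤ ε / (3 * K) := min_le_left _ _
      have h4 : K * (QF B (x - y k) - QF S (x - y k)) ≤ K * (ε / (3 * K)) :=
        mul_le_mul_of_nonneg_left (le_trans h2 h3) hK.le
      have h5 : K * (ε / (3 * K)) = ε / 3 := by field_simp
      linarith
    have hp2 : |QF E (y k)| ≤ ε / 3 := by
      have h1 := hE1 (y k)
      have h2 : QF M (y k) ≤ QF A (y k) + QF S (y k) := hMsmall (y k)
      have h3 : QF S (y k) ≤ ε / (6 * K) := hK2 k hk2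
      have h4 : QF A (y k) ≤ ε / (6 * K) := le_trans (hAy k) (hK3' k hk3)
      have h5 : K * QF M (y k) ≤ K * (ε / (6 * K) + ε / (6 * K)) :=
        mul_le_mul_of_nonneg_left (by linarith) hK.le
      have h6 : K * (ε / (6 * K) + ε / (6 * K)) = ε / 3 := by field_simp; ring
      linarith
    have hpolar := abs_polar_le hKT hE2' (x - y k) (y k)
    rw [sub_add_cancel] at hpolar
    have hq1 : QF (K • (B - S)) (x - y k) ≤ K * δ1 := by
      rw [QF_smul_op, QF_sub]
      exact mul_le_mul_of_nonneg_left (hK1 k hk1) hK.le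
    have hq2 : QF (K • (B - S)) (y k) ≤ K * Cb := by
      rw [QF_smul_op, QF_sub]
      exact mul_le_mul_of_nonneg_left (hTyb k) hK.le
    have hs1 : Real.sqrt (QF (K • (B - S)) (x - y k)) ≤ c2 := by
      have h1 : K * δ1 ≤ c2 ^ 2 := by
        have h2 : δ1 ≤ c2 ^ 2 / K := min_le_right _ _
        have h3 : K * δ1 ≤ K * (c2 ^ 2 / K) := mul_le_mul_of_nonneg_left h2 hK.le
        have h4 : K * (c2 ^ 2 / K) = c2 ^ 2 := by field_simp
        linarith
      have h5 := Real.sqrt_le_sqrt (le_trans hq1 h1)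
      rwa [Real.sqrt_sq hc20.le] at h5
    have hs2 : Real.sqrt (QF (K • (B - S)) (y k)) ≤ Real.sqrt (K * Cb) :=
      Real.sqrt_le_sqrt hq2
    have hs0 : 0 ≤ Real.sqrt (QF (K • (B - S)) (x - y k)) := Real.sqrt_nonneg _
    have hs0' : 0 ≤ Real.sqrt (QF (K • (B - S)) (y k)) := Real.sqrt_nonneg _
    have hKCb : 0 ≤ Real.sqrt (K * Cb) := Real.sqrt_nonneg _
    have hp3 : 2 * Real.sqrt (QF (K • (B - S)) (x - y k))
        * Real.sqrt (QF (K • (B - S)) (y k)) ≤ ε / 3 := by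
      have h1 : 2 * Real.sqrt (QF (K • (B - S)) (x - y k))
          * Real.sqrt (QF (K • (B - S)) (y k)) ≤ 2 * c2 * Real.sqrt (K * Cb) := by
        nlinarith
      have h2 : 2 * c2 * Real.sqrt (K * Cb) ≤ ε / 3 := by
        have hc2' : c2 * (6 * (Real.sqrt (K * Cb) + 1)) = ε := by
          rw [hc2def]; field_simp
        linarith [mul_nonneg hc20.le hKCb]
      linarith
    have habs1 := abs_le.mp hp1
    have habs2 := abs_le.mp hp2
    have habs3 := abs_le.mp hpolar
    rw [abs_le]
    constructor <;> linarith
  by_contra hne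
  have hpos : 0 < |QF E x| := abs_pos.mpr hne
  have := habs (|QF E x| / 2) (by positivity)
  linarith

lemma im_add {P Q : H →L[ℂ] H} (hP : IsPosOp P) (hQ : IsPosOp Q) (z : H) :
    (inner ℂ ((P + Q) z) z : ℂ).im = 0 := by
  have h1 := QF_im hP z
  have h2 := QF_im hQ z
  simp [ContinuousLinearMap.add_apply, inner_add_left, h1, h2]

set_option maxHeartbeats 1000000 in
theorem short_is_extreme_point'
    {H : Type*} [NormedAddCommGroup H] [InnerProductSpace ℂ H] [CompleteSpace H]
    (A B S : H →L[ℂ] H) (hA : IsPosOp A) (hB : IsPosOp B) (hS : IsPosOp S)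
    (hshort : IsShort A B S) :
    S ∈ Set.extremePoints ℝ {C : H →L[ℂ] H | IsPosOp C ∧ OpLe C B} ∧
      A + S ∈ Set.extremePoints ℝ {C : H →L[ℂ] H | IsPosOp C ∧ OpLe C (A + B)} := by
  have hshortF : ∀ x : H, QF S x = ⨆ n : ℕ, Fn A B n x := hshort
  have hSleB : ∀ z : H, QF S z ≤ QF B z := fun z => by
    rw [hshortF z]
    exact ciSup_le fun n => Fn_le_B hA hB n z
  have hTre : ∀ z : H, 0 ≤ QF (B - S) z := fun z => by
    rw [QF_sub]; linarith [hSleB z]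
  have hTpos : IsPosOp (B - S) := isPosOp_of_QF hTre (im_sub hB hS)
  have hASpos : IsPosOp (A + S) := isPosOp_of_QF
    (fun z => by rw [QF_add]; exact add_nonneg (QF_nonneg hA z) (QF_nonneg hS z))
    (im_add hA hS)
  have hASB : OpLe (A + S) (A + B) := by
    show IsPosOp ((A + B) - (A + S))
    rw [show (A + B) - (A + S) = B - S from by abel]
    exact hTpos
  constructor
  · rw [mem_extremePoints]
    refine ⟨⟨hS, hTpos⟩, ?_⟩
    rintro C₁ ⟨hC₁pos, hC₁le⟩ C₂ ⟨hC₂pos, hC₂le⟩ hseg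
    obtain ⟨a, b, ha, hb, hab, hsum⟩ := hseg
    set E := C₁ - S with hEdef
    have hq : ∀ w : H, a * QF C₁ w + b * QF C₂ w = QF S w := fun w => by
      rw [← hsum, QF_add, QF_smul_op, QF_smul_op]
    have hEw : ∀ w : H, QF E w = QF C₁ w - QF S w := fun w => by rw [hEdef, QF_sub]
    have hEa : ∀ w : H, a * QF E w = b * (QF S w - QF C₂ w) := fun w => by
      rw [hEw]
      linear_combination hq w - QF S w * hab
    obtain ⟨K, hKdef⟩ : ∃ K : ℝ, K = 1 + b / a := ⟨_, rfl⟩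
    have hba : 0 < b / a := div_pos hb ha
    have hK : 0 < K := by rw [hKdef]; linarith
    have hKge1 : 1 ≤ K := by rw [hKdef]; linarith
    have hKgeba : b / a ≤ K := by rw [hKdef]; linarith
    have hE1 : ∀ w : H, |QF E w| ≤ K * QF S w := fun w => by
      rw [abs_le]
      constructor
      · have h1 : 0 ≤ QF C₁ w := QF_nonneg hC₁pos w
        have h2 : 0 ≤ QF S w := QF_nonneg hS w
        have h3 : 0 ≤ (K - 1) * QF S w := mul_nonneg (by linarith) h2
        rw [hEw]
        linarith
      · have h4 : a * QF E w ≤ b * QF S w := by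
          have h5 : 0 ≤ b * QF C₂ w := mul_nonneg hb.le (QF_nonneg hC₂pos w)
          linarith [hEa w]
        have h6 : QF E w ≤ b / a * QF S w := by
          rw [div_mul_eq_mul_div, le_div_iff₀ ha]
          linarith
        have h7 : b / a * QF S w ≤ K * QF S w :=
          mul_le_mul_of_nonneg_right hKgeba (QF_nonneg hS w)
        linarith
    have hE2 : ∀ w : H, |QF E w| ≤ K * (QF B w - QF S w) := fun w => by
      have hT0 : 0 ≤ QF B w - QF S w := by linarith [hSleB w]
      rw [abs_le]
      constructor
      · have h1 : QF C₂ w ≤ QF B w := OpLe_QF hC₂le w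
        have h4 : -(b * (QF B w - QF S w)) ≤ a * QF E w := by
          have h5 : b * QF C₂ w ≤ b * QF B w := mul_le_mul_of_nonneg_left h1 hb.le
          linarith [hEa w]
        have h6 : -QF E w ≤ b / a * (QF B w - QF S w) := by
          rw [div_mul_eq_mul_div, le_div_iff₀ ha]
          linarith
        have h7 : b / a * (QF B w - QF S w) ≤ K * (QF B w - QF S w) :=
          mul_le_mul_of_nonneg_right hKgeba hT0
        linarith
      · have h1 : QF C₁ w ≤ QF B w := OpLe_QF hC₁le w
        have h3 : 0 ≤ (K - 1) * (QF B w - QF S w) := mul_nonneg (by linarith) hT0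
        rw [hEw]
        linarith
    have hzero : ∀ w : H, QF E w = 0 := fun w =>
      key_lemma hA hB hS hshortF hK hS (fun z => by linarith [QF_nonneg hA z]) hE1 hE2 w
    have him : ∀ w : H, (inner ℂ (E w) w : ℂ).im = 0 := fun w => im_sub hC₁pos hS w
    have hEc : ∀ w : H, (inner ℂ (E w) w : ℂ) = 0 := fun w =>
      Complex.ext (by simpa [QF] using hzero w) (by simpa using him w)
    have hElin : (E : H →ₗ[ℂ] H) = 0 := (inner_map_self_eq_zero _).mp (fun w => hEc w)
    have hE0 : E = 0 := by
      ext w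
      have h := congrFun (congrArg (fun (f : H →ₗ[ℂ] H) => (f : H → H)) hElin) w
      simpa using h
    have hC₁ : C₁ = S := by
      have h := hE0
      rw [hEdef] at h
      exact sub_eq_zero.mp h
    refine ⟨hC₁, ?_⟩
    rw [hC₁] at hsum
    have h2 : b • C₂ = b • S := by
      have h3 : a • S + b • C₂ - a • S = S - a • S := by rw [hsum]
      rw [add_sub_cancel_left] at h3
      have h4 : S - a • S = b • S := by
        rw [show b = 1 - a from by linarith, sub_smul, one_smul]
      rw [h3, h4]
    calc C₂ = b⁻¹ • (b • C₂) := (inv_smul_smul₀ (ne_of_gt hb) C₂).symm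
      _ = b⁻¹ • (b • S) := by rw [h2]
      _ = S := inv_smul_smul₀ (ne_of_gt hb) S
  · rw [mem_extremePoints]
    refine ⟨⟨hASpos, hASB⟩, ?_⟩
    rintro C₁ ⟨hC₁pos, hC₁le⟩ C₂ ⟨hC₂pos, hC₂le⟩ hseg
    obtain ⟨a, b, ha, hb, hab, hsum⟩ := hseg
    set E := C₁ - (A + S) with hEdef
    have hq : ∀ w : H, a * QF C₁ w + b * QF C₂ w = QF (A + S) w := fun w => by
      rw [← hsum, QF_add, QF_smul_op, QF_smul_op]
    have hEw : ∀ w : H, QF E w = QF C₁ w - QF (A + S) w := fun w => by rw [hEdef, QF_sub]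
    have hEa : ∀ w : H, a * QF E w = b * (QF (A + S) w - QF C₂ w) := fun w => by
      rw [hEw]
      linear_combination hq w - QF (A + S) w * hab
    obtain ⟨K, hKdef⟩ : ∃ K : ℝ, K = 1 + b / a := ⟨_, rfl⟩
    have hba : 0 < b / a := div_pos hb ha
    have hK : 0 < K := by rw [hKdef]; linarith
    have hKge1 : 1 ≤ K := by rw [hKdef]; linarith
    have hKgeba : b / a ≤ K := by rw [hKdef]; linarith
    have hE1 : ∀ w : H, |QF E w| ≤ K * QF (A + S) w := fun w => by
      rw [abs_le]
      constructor
      · have h1 : 0 ≤ QF C₁ w := QF_nonneg hC₁pos w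
        have h2 : 0 ≤ QF (A + S) w := QF_nonneg hASpos w
        have h3 : 0 ≤ (K - 1) * QF (A + S) w := mul_nonneg (by linarith) h2
        rw [hEw]
        linarith
      · have h4 : a * QF E w ≤ b * QF (A + S) w := by
          have h5 : 0 ≤ b * QF C₂ w := mul_nonneg hb.le (QF_nonneg hC₂pos w)
          linarith [hEa w]
        have h6 : QF E w ≤ b / a * QF (A + S) w := by
          rw [div_mul_eq_mul_div, le_div_iff₀ ha]
          linarith
        have h7 : b / a * QF (A + S) w ≤ K * QF (A + S) w :=
          mul_le_mul_of_nonneg_right hKgeba (QF_nonneg hASpos w)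
        linarith
    have hE2 : ∀ w : H, |QF E w| ≤ K * (QF B w - QF S w) := fun w => by
      have hT0 : 0 ≤ QF B w - QF S w := by linarith [hSleB w]
      have hABw : QF (A + B) w = QF A w + QF B w := QF_add A B w
      have hASw : QF (A + S) w = QF A w + QF S w := QF_add A S w
      rw [abs_le]
      constructor
      · have h1 : QF C₂ w ≤ QF (A + B) w := OpLe_QF hC₂le w
        have h4 : -(b * (QF B w - QF S w)) ≤ a * QF E w := by
          have h5 : b * QF C₂ w ≤ b * QF (A + B) w := mul_le_mul_of_nonneg_left h1 hb.le
          have h6 : b * QF (A + B) w = b * QF A w + b * QF B w := by rw [hABw]; ring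
          have h7 : b * QF (A + S) w = b * QF A w + b * QF S w := by rw [hASw]; ring
          linarith [hEa w]
        have h6 : -QF E w ≤ b / a * (QF B w - QF S w) := by
          rw [div_mul_eq_mul_div, le_div_iff₀ ha]
          linarith
        have h7 : b / a * (QF B w - QF S w) ≤ K * (QF B w - QF S w) :=
          mul_le_mul_of_nonneg_right hKgeba hT0
        linarith
      · have h1 : QF C₁ w ≤ QF (A + B) w := OpLe_QF hC₁le w
        have h3 : 0 ≤ (K - 1) * (QF B w - QF S w) := mul_nonneg (by linarith) hT0
        rw [hEw, hASw]
        rw [hABw] at h1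
        linarith
    have hzero : ∀ w : H, QF E w = 0 := fun w =>
      key_lemma hA hB hS hshortF hK hASpos
        (fun z => le_of_eq (QF_add A S z)) hE1 hE2 w
    have him : ∀ w : H, (inner ℂ (E w) w : ℂ).im = 0 := fun w => im_sub hC₁pos hASpos w
    have hEc : ∀ w : H, (inner ℂ (E w) w : ℂ) = 0 := fun w =>
      Complex.ext (by simpa [QF] using hzero w) (by simpa using him w)
    have hElin : (E : H →ₗ[ℂ] H) = 0 := (inner_map_self_eq_zero _).mp (fun w => hEc w)
    have hE0 : E = 0 := by
      ext w
      have h := congrFun (congrArg (fun (f : H →ₗ[ℂ] H) => (f : H → H)) hElin) w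
      simpa using h
    have hC₁ : C₁ = A + S := by
      have h := hE0
      rw [hEdef] at h
      exact sub_eq_zero.mp h
    refine ⟨hC₁, ?_⟩
    rw [hC₁] at hsum
    have h2 : b • C₂ = b • (A + S) := by
      have h3 : a • (A + S) + b • C₂ - a • (A + S) = (A + S) - a • (A + S) := by rw [hsum]
      rw [add_sub_cancel_left] at h3
      have h4 : (A + S) - a • (A + S) = b • (A + S) := by
        rw [show b = 1 - a from by linarith, sub_smul, one_smul]
      rw [h3, h4]
    calc C₂ = b⁻¹ • (b • C₂) := (inv_smul_smul₀ (ne_of_gt hb) C₂).symm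
      _ = b⁻¹ • (b • (A + S)) := by rw [h2]
      _ = A + S := inv_smul_smul₀ (ne_of_gt hb) (A + S)

end Aux

theorem short_is_extreme_point
    {H : Type*} [NormedAddCommGroup H] [InnerProductSpace ℂ H] [CompleteSpace H]
    (A B S : H →L[ℂ] H) (hA : IsPosOp A) (hB : IsPosOp B) (hS : IsPosOp S)
    (hshort : IsShort A B S) :
    S ∈ Set.extremePoints ℝ {C : H →L[ℂ] H | IsPosOp C ∧ OpLe C B} ∧
      A + S ∈ Set.extremePoints ℝ {C : H →L[ℂ] H | IsPosOp C ∧ OpLe C (A + B)} :=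
  short_is_extreme_point' A B S hA hB hS hshort
end
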